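/- arXiv:1104.0339 — 7 statements merged into one kernel-verified Lean document; each statement's English description precedes it below -/
import Mathlib

section
/- For pairwise p-commuting variables x_1,...,x_k (x_i x_j = p x_j x_i for i < j), the ell-fold q-geometric series satisfies phi_ell(x_1 + ... + x_k) = sum over nonnegative integers m_1,...,m_k of the quantum multinomial coefficient [ell - 1 + m_1 + ... + m_k; ell-1, m_1, ..., m_k]_p times x_k^{m_k} x_{k-1}^{m_{k-1}} ... x_1^{m_1}, whenever all series converge formally (e.g. the x_i are nilpotent-graded or t-adic). -/
/-- The Gaussian (quantum) binomial coefficient `[n choose k]_p`. -/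
def qBinom {R : Type*} [Ring R] (p : R) : ℕ → ℕ → R
  | _, 0 => 1
  | 0, _ + 1 => 0
  | n + 1, k + 1 => qBinom p n k + p ^ (k + 1) * qBinom p n (k + 1)

/-- The quantum multinomial coefficient `[m₁+⋯+m_k ; m₁,…,m_k]_p`. -/
def qMultinom {R : Type*} [Ring R] (p : R) {k : ℕ} (m : Fin k → ℕ) : R :=
  (List.ofFn fun i : Fin k =>
    qBinom p (∑ j : Fin k, if i ≤ j then m j else 0) (m i)).prod

namespace QAux

variable {R : Type*} [Ring R] (p : R)

@[simp] lemma qBinom_zero_right (n : ℕ) : qBinom p n 0 = 1 := by cases n <;> rfl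
@[simp] lemma qBinom_zero_succ (k : ℕ) : qBinom p 0 (k+1) = 0 := rfl
lemma qBinom_succ_succ (n k : ℕ) :
    qBinom p (n+1) (k+1) = qBinom p n k + p^(k+1) * qBinom p n (k+1) := rfl

lemma qBinom_eq_zero : ∀ {n k : ℕ}, n < k → qBinom p n k = 0
  | 0, _+1, _ => rfl
  | n+1, k+1, h => by
    rw [qBinom_succ_succ, qBinom_eq_zero (by omega), qBinom_eq_zero (by omega),
      mul_zero, add_zero]

@[simp] lemma qBinom_self : ∀ n : ℕ, qBinom p n n = 1
  | 0 => rfl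
  | n+1 => by
    rw [qBinom_succ_succ, qBinom_self n,
      show qBinom p n (n+1) = 0 from qBinom_eq_zero p (Nat.lt_succ_self n), mul_zero, add_zero]

lemma qBinom_pascal2 : ∀ (n k : ℕ), k ≤ n →
    qBinom p (n+1) (k+1) = p^(n-k) * qBinom p n k + qBinom p n (k+1)
  | 0, 0, _ => by simp [qBinom_succ_succ]
  | n+1, 0, _ => by
    rw [qBinom_succ_succ p (n+1) 0]
    nth_rewrite 1 [qBinom_pascal2 n 0 (Nat.zero_le n)]
    rw [qBinom_succ_succ p n 0]
    simp only [qBinom_zero_right, mul_one, one_mul, mul_add, ← mul_assoc, ← pow_add]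
    have e1 : 0 + 1 + (n - 0) = n + 1 - 0 := by omega
    rw [e1]
    abel
  | n+1, k+1, h => by
    rcases Nat.lt_or_ge (k+1) (n+1) with h' | h'
    · rw [qBinom_succ_succ p (n+1) (k+1)]
      nth_rewrite 1 [qBinom_pascal2 n k (by omega)]
      nth_rewrite 1 [qBinom_pascal2 n (k+1) (by omega)]
      rw [qBinom_succ_succ p n (k+1), qBinom_succ_succ p n k,
        mul_add, mul_add, ← mul_assoc, ← mul_assoc, ← pow_add, ← pow_add]
      have e0 : k + 1 + 1 + (n - (k+1)) = n + 1 - (k+1) + (k+1) := by omega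
      have e0' : n + 1 - (k + 1) = n - k := by omega
      rw [e0, e0']
      abel
    · have hk : k = n := by omega
      subst hk
      simp [qBinom_self, qBinom_eq_zero p (Nat.lt_succ_self (k+1)),
        qBinom_eq_zero p (show k+1 < k+2 by omega)]

lemma qBinom_symm : ∀ (n k : ℕ), k ≤ n → qBinom p n k = qBinom p n (n - k)
  | 0, 0, _ => rfl
  | n+1, 0, _ => by simp
  | n+1, k+1, h => by
    rcases Nat.lt_or_ge (k+1) (n+1) with h' | h'
    · have e1 : n + 1 - (k+1) = (n - (k+1)) + 1 := by omega
      have e2 : n - (n - (k+1)) = k+1 := by omega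
      have e3 : n - k = (n - (k+1)) + 1 := by omega
      rw [qBinom_succ_succ, qBinom_symm n k (by omega), qBinom_symm n (k+1) (by omega), e1,
        qBinom_pascal2 p n (n-(k+1)) (by omega), e2, e3]
      abel
    · have hk : k = n := by omega
      subst hk
      simp

variable {A : Type*} [Ring A]

lemma pow_semiconj {p a b : A} (hpc : ∀ c : A, p * c = c * p)
    (hab : a * b = p * (b * a)) : ∀ j : ℕ, a ^ j * b = p ^ j * (b * a ^ j)
  | 0 => by simp
  | j+1 => by
    have hc : ∀ (c : A) (m : ℕ), c * p ^ m = p ^ m * c := fun c m =>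
      ((show Commute p c from hpc c).pow_left m).eq.symm
    calc a ^ (j+1) * b = a * (a ^ j * b) := by rw [pow_succ']; rw [mul_assoc]
      _ = a * (p ^ j * (b * a ^ j)) := by rw [pow_semiconj hpc hab j]
      _ = p ^ j * (a * b * a ^ j) := by
          rw [← mul_assoc, hc a j, mul_assoc, mul_assoc]
      _ = p ^ j * (p * (b * a) * a ^ j) := by rw [hab]
      _ = p ^ (j+1) * (b * a ^ (j+1)) := by
          rw [pow_succ p j, pow_succ' a j]
          simp only [← mul_assoc]

lemma qbinom_theorem {p : A} (hpc : ∀ c : A, p * c = c * p) {a b : A}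
    (hab : a * b = p * (b * a)) :
    ∀ N : ℕ, (a + b) ^ N
      = ∑ j ∈ Finset.range (N+1), qBinom p N j * (b ^ (N - j) * a ^ j)
  | 0 => by simp
  | N+1 => by
    have hc : ∀ (c : A) (m : ℕ), c * p ^ m = p ^ m * c := fun c m =>
      ((show Commute p c from hpc c).pow_left m).eq.symm
    have key : ∀ j : ℕ, qBinom p N j * (b ^ (N - j) * a ^ j) * (a + b)
        = qBinom p N j * (b ^ (N - j) * a ^ (j+1))
          + p ^ j * (qBinom p N j * (b ^ (N - j + 1) * a ^ j)) := by
      intro j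
      rw [mul_add]
      congr 1
      · simp only [mul_assoc, pow_succ]
      · rw [mul_assoc, mul_assoc, pow_semiconj hpc hab j, ← mul_assoc, ← mul_assoc,
          ← mul_assoc, hc _ j, mul_assoc (p^j), mul_assoc (qBinom p N j),
          ← pow_succ, mul_assoc, mul_assoc]
    have lhs_eq : (a + b) ^ (N+1)
        = (∑ j ∈ Finset.range (N+1), qBinom p N j * (b ^ (N - j) * a ^ (j+1)))
          + ((∑ j ∈ Finset.range N,
              p ^ (j+1) * (qBinom p N (j+1) * (b ^ (N - j) * a ^ (j+1)))) + b ^ (N+1)) := by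
      rw [pow_succ, qbinom_theorem hpc hab N, Finset.sum_mul]
      rw [show ∀ s : Finset ℕ, ∑ j ∈ s, qBinom p N j * (b ^ (N - j) * a ^ j) * (a + b)
          = ∑ j ∈ s, (qBinom p N j * (b ^ (N - j) * a ^ (j+1))
            + p ^ j * (qBinom p N j * (b ^ (N - j + 1) * a ^ j)))
        from fun s => Finset.sum_congr rfl fun j _ => key j]
      rw [Finset.sum_add_distrib]
      congr 1
      rw [Finset.sum_range_succ']
      congr 1
      · apply Finset.sum_congr rfl
        intro j hj
        have hjN : j < N := Finset.mem_range.mp hj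
        have : N - (j+1) + 1 = N - j := by omega
        rw [this]
      · simp
    rw [lhs_eq, Finset.sum_range_succ' _ (N+1)]
    have h0 : qBinom p (N+1) 0 * (b ^ (N + 1 - 0) * a ^ 0) = b ^ (N+1) := by simp
    rw [h0]
    have hsucc : ∀ j : ℕ, qBinom p (N+1) (j+1) * (b ^ (N + 1 - (j+1)) * a ^ (j+1))
        = qBinom p N j * (b ^ (N - j) * a ^ (j+1))
          + p ^ (j+1) * (qBinom p N (j+1) * (b ^ (N - j) * a ^ (j+1))) := by
      intro j
      rw [qBinom_succ_succ, add_mul, Nat.succ_sub_succ_eq_sub, mul_assoc]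
    rw [show ∑ j ∈ Finset.range (N+1), qBinom p (N+1) (j+1) * (b ^ (N + 1 - (j+1)) * a ^ (j+1))
        = ∑ j ∈ Finset.range (N+1), (qBinom p N j * (b ^ (N - j) * a ^ (j+1))
          + p ^ (j+1) * (qBinom p N (j+1) * (b ^ (N - j) * a ^ (j+1))))
      from Finset.sum_congr rfl fun j _ => hsucc j]
    rw [Finset.sum_add_distrib,
      Finset.sum_range_succ (fun j => p ^ (j+1) * (qBinom p N (j+1) * (b ^ (N - j) * a ^ (j+1)))) N,
      show qBinom p N (N+1) = 0 from qBinom_eq_zero p (Nat.lt_succ_self N)]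
    simp only [zero_mul, mul_zero, add_zero]
    abel

lemma qMultinom_nil (p : A) (m : Fin 0 → ℕ) : qMultinom p m = 1 := by
  simp [qMultinom]

lemma qMultinom_cons (p : A) {k : ℕ} (a : ℕ) (m : Fin k → ℕ) :
    qMultinom p (Fin.cons a m) = qBinom p (a + ∑ j, m j) a * qMultinom p m := by
  unfold qMultinom
  rw [List.ofFn_succ, List.prod_cons]
  congr 1
  · simp [Fin.sum_univ_succ, Fin.zero_le]
  · apply congrArg
    rw [List.ofFn_inj]
    funext i
    rw [Fin.sum_univ_succ]
    simp [Fin.succ_le_succ_iff, Fin.cons_succ, (Fin.succ_pos i).not_ge]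

lemma sum_antidiagonalTuple_succ {M : Type*} [AddCommMonoid M] (k N : ℕ)
    (f : (Fin (k+1) → ℕ) → M) :
    ∑ m ∈ Finset.Nat.antidiagonalTuple (k+1) N, f m
      = ∑ a ∈ Finset.range (N+1), ∑ m ∈ Finset.Nat.antidiagonalTuple k (N - a),
          f (Fin.cons a m) := by
  have step2 : ∑ x ∈ (Finset.range (N+1)).sigma (fun a => Finset.Nat.antidiagonalTuple k (N - a)),
      f (Fin.cons x.1 x.2)
      = ∑ a ∈ Finset.range (N+1), ∑ m ∈ Finset.Nat.antidiagonalTuple k (N - a),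
          f (Fin.cons a m) := Finset.sum_sigma _ _ _
  refine Eq.trans ?_ step2
  refine Finset.sum_nbij' (fun m => ⟨m 0, Fin.tail m⟩) (fun q => Fin.cons q.1 q.2)
    ?_ ?_ ?_ ?_ ?_
  · intro m hm
    rw [Finset.Nat.mem_antidiagonalTuple] at hm
    rw [Fin.sum_univ_succ] at hm
    rw [Finset.mem_sigma, Finset.mem_range, Finset.Nat.mem_antidiagonalTuple]
    constructor
    · exact Nat.lt_succ_of_le (by rw [← hm]; exact Nat.le_add_right _ _)
    · show (∑ i : Fin k, m i.succ) = N - m 0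
      rw [← hm, Nat.add_sub_cancel_left]
  · intro q hq
    rw [Finset.mem_sigma, Finset.mem_range, Finset.Nat.mem_antidiagonalTuple] at hq
    rw [Finset.Nat.mem_antidiagonalTuple, Fin.sum_univ_succ]
    simp only [Fin.cons_zero, Fin.cons_succ]
    rw [hq.2]
    exact Nat.add_sub_cancel' (Nat.lt_succ_iff.mp hq.1)
  · intro m _
    exact Fin.cons_self_tail m
  · intro q _
    ext
    · simp
    · simp [Fin.tail_cons]
  · intro m _
    rw [Fin.cons_self_tail]

lemma qmultinomial {p : A} (hpc : ∀ c : A, p * c = c * p) :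
    ∀ (k : ℕ) (x : Fin k → A),
      (∀ i j : Fin k, i < j → x i * x j = p * (x j * x i)) →
      ∀ N : ℕ, (∑ i, x i) ^ N
        = ∑ m ∈ Finset.Nat.antidiagonalTuple k N,
            qMultinom p m * (List.ofFn fun i : Fin k => x i ^ m i).reverse.prod
  | 0, x, _, N => by
    match N with
    | 0 => simp [Finset.Nat.antidiagonalTuple_zero_zero, qMultinom_nil]
    | N+1 => simp [Finset.Nat.antidiagonalTuple_zero_succ]
  | k+1, x, hx, N => by
    have hsum : (∑ i, x i) = x 0 + ∑ i : Fin k, x i.succ := Fin.sum_univ_succ x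
    have hab : x 0 * (∑ i : Fin k, x i.succ) = p * ((∑ i : Fin k, x i.succ) * x 0) := by
      rw [Finset.mul_sum, Finset.sum_mul, Finset.mul_sum]
      exact Finset.sum_congr rfl fun i _ => hx 0 i.succ (Fin.succ_pos i)
    have hx' : ∀ i j : Fin k, i < j → x i.succ * x j.succ = p * (x j.succ * x i.succ) :=
      fun i j hij => hx i.succ j.succ (Fin.succ_lt_succ_iff.mpr hij)
    rw [hsum, qbinom_theorem hpc hab N, sum_antidiagonalTuple_succ]
    apply Finset.sum_congr rfl
    intro a ha
    have haN : a ≤ N := by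
      rw [Finset.mem_range] at ha; omega
    rw [qmultinomial hpc k (fun i => x i.succ) hx' (N - a), Finset.sum_mul, Finset.mul_sum]
    apply Finset.sum_congr rfl
    intro m hm
    have hmsum : (∑ i, m i) = N - a := Finset.Nat.mem_antidiagonalTuple.mp hm
    rw [qMultinom_cons, hmsum, show a + (N - a) = N by omega]
    have hlist : (List.ofFn fun i : Fin (k+1) => x i ^ (Fin.cons a m : Fin (k+1) → ℕ) i)
        = x 0 ^ a :: List.ofFn fun i : Fin k => x i.succ ^ m i := by
      rw [List.ofFn_succ]
      simp
    rw [hlist, List.reverse_cons, List.prod_append, List.prod_singleton]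
    simp only [mul_assoc]

end QAux


open PowerSeries in
/-- For pairwise `p`-commuting `x_1,…,x_k`, the `t`-adic series
`φ_ℓ(t(x_1+⋯+x_k)) = ∑_N [ℓ+N-1 choose N]_p t^N (x_1+⋯+x_k)^N` equals
`∑_{m_1,…,m_k ≥ 0} [ℓ-1+m_1+⋯+m_k ; ℓ-1, m_1,…,m_k]_p t^{Σm} x_k^{m_k}⋯x_1^{m_1}`,
using the factorization `[ℓ-1+N; ℓ-1, m₁,…,m_k]_p = [ℓ-1+N choose ℓ-1]_p [N; m₁,…,m_k]_p`. -/
theorem phi_multinomial {A : Type*} [Ring A] (p : A) (hpc : ∀ a : A, p * a = a * p)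
    (k ℓ : ℕ) (hℓ : 1 ≤ ℓ) (x : Fin k → A)
    (hx : ∀ i j : Fin k, i < j → x i * x j = p * (x j * x i)) :
    PowerSeries.mk (fun N => qBinom p (ℓ + N - 1) N * (∑ i, x i) ^ N) =
      PowerSeries.mk (fun N =>
        ∑ m ∈ Finset.Nat.antidiagonalTuple k N,
          qBinom p (ℓ - 1 + N) (ℓ - 1) * qMultinom p m *
            (List.ofFn fun i : Fin k => x i ^ m i).reverse.prod) := by
  ext N
  simp only [PowerSeries.coeff_mk]
  obtain ⟨ℓ', rfl⟩ : ∃ ℓ', ℓ = ℓ' + 1 := ⟨ℓ - 1, by omega⟩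
  have e1 : ℓ' + 1 + N - 1 = ℓ' + N := by omega
  have e2 : ℓ' + 1 - 1 = ℓ' := by omega
  rw [e1, e2]
  have hsym : qBinom p (ℓ' + N) N = qBinom p (ℓ' + N) ℓ' := by
    rw [QAux.qBinom_symm p (ℓ' + N) N (Nat.le_add_left N ℓ'), Nat.add_sub_cancel]
  rw [hsym, QAux.qmultinomial hpc k x hx N, Finset.mul_sum]
  apply Finset.sum_congr rfl
  intro m hm
  rw [← mul_assoc]
end

section
/- In an associative unital ring, if 1 - c - u and 1 - u are invertible, and 1 - (1-u)^{-1} c is invertible, then for any a, b: a + b + (1 - c - u)^{-1} c b = a + (1 - c - u)^{-1}(1 - u) b = a + (1 - (1-u)^{-1} c)^{-1} b. -/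
/-- Noncommutative continued-fraction rearrangement identity:
if `1 - c - u`, `1 - u` and `1 - (1-u)⁻¹ c` are invertible, then for any `a`, `b`:
`a + b + (1-c-u)⁻¹ c b = a + (1-c-u)⁻¹ (1-u) b = a + (1 - (1-u)⁻¹ c)⁻¹ b`. -/
theorem cf_rearrange {R : Type*} [Ring R] (a b c u : R)
    (h1 : IsUnit (1 - c - u)) (h2 : IsUnit (1 - u))
    (h3 : IsUnit (1 - Ring.inverse (1 - u) * c)) :
    a + b + Ring.inverse (1 - c - u) * c * b
        = a + Ring.inverse (1 - c - u) * (1 - u) * b ∧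
      a + Ring.inverse (1 - c - u) * (1 - u) * b
        = a + Ring.inverse (1 - Ring.inverse (1 - u) * c) * b := by
  set A := 1 - c - u with hA
  have key1 : Ring.inverse A * (1 - u) = 1 + Ring.inverse A * c := by
    have : (1 : R) - u = A + c := by rw [hA]; abel
    rw [this, mul_add, Ring.inverse_mul_cancel A h1]
  have hx : 1 - Ring.inverse (1 - u) * c = Ring.inverse (1 - u) * A := by
    have hA' : A = (1 - u) - c := by rw [hA]; abel
    rw [hA', mul_sub, Ring.inverse_mul_cancel _ h2]
  have key2 : Ring.inverse (1 - Ring.inverse (1 - u) * c)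
      = Ring.inverse A * (1 - u) := by
    have hmul : (1 - Ring.inverse (1 - u) * c) * (Ring.inverse A * (1 - u)) = 1 := by
      rw [hx, mul_assoc, ← mul_assoc A, Ring.mul_inverse_cancel A h1, one_mul,
        Ring.inverse_mul_cancel _ h2]
    calc Ring.inverse (1 - Ring.inverse (1 - u) * c)
        = Ring.inverse (1 - Ring.inverse (1 - u) * c) *
            ((1 - Ring.inverse (1 - u) * c) * (Ring.inverse A * (1 - u))) := by
          rw [hmul, mul_one]
      _ = Ring.inverse A * (1 - u) := by
          rw [← mul_assoc, Ring.inverse_mul_cancel _ h3, one_mul]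
  constructor
  · rw [key1, add_mul, one_mul, add_assoc]
  · rw [key2]
end

section
/- If x and J are elements of a complete filtered ring with x*J = p*J*x for a central element p, and t is a central formal variable, then (1 - t x - t J)^{-1}, expanded as a formal power series in t, equals sum over nonnegative integers j, n of the Gaussian binomial coefficient [j+n choose j]_p times (tJ)^n (tx)^j. -/
section aux
variable {A : Type*} [Ring A] (p : A)

lemma qBinom_succ_succ (n k : ℕ) :
    qBinom p (n+1) (k+1) = qBinom p n k + p ^ (k+1) * qBinom p n (k+1) := rfl

lemma qBinom_zero : ∀ n, qBinom (p := p) n 0 = 1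
  | 0 => rfl
  | _+1 => rfl

lemma qBinom_eq_zero : ∀ n k, n < k → qBinom (p := p) n k = 0
  | 0, _+1, _ => by simp [qBinom]
  | n+1, k+1, h => by
    rw [qBinom_succ_succ, qBinom_eq_zero n k (by omega), qBinom_eq_zero n (k+1) (by omega)]
    simp

lemma qBinom_diag : ∀ n, qBinom (p := p) n n = 1
  | 0 => rfl
  | n+1 => by
    rw [qBinom_succ_succ, qBinom_diag n, qBinom_eq_zero p n (n+1) (by omega)]; simp

lemma pascal2 : ∀ n k, k ≤ n →
    qBinom p (n+1) (k+1) = p ^ (n-k) * qBinom p n k + qBinom p n (k+1)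
  | 0, 0, _ => by simp [qBinom]
  | n+1, 0, _ => by
    have ih := pascal2 n 0 (Nat.zero_le n)
    calc qBinom p (n+1+1) (0+1)
        = qBinom p (n+1) 0 + p ^ (0+1) * qBinom p (n+1) (0+1) := rfl
      _ = qBinom p (n+1) 0 + p ^ (0+1) * (p ^ (n-0) * qBinom p n 0 + qBinom p n (0+1)) := by
          rw [ih]
      _ = p ^ (n+1-0) * qBinom p (n+1) 0 + (qBinom p n 0 + p ^ (0+1) * qBinom p n (0+1)) := by
          simp only [qBinom, Nat.sub_zero, Nat.zero_add, zero_add, pow_one, mul_one, mul_add,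
            ← pow_succ']
          abel
      _ = p ^ (n+1-0) * qBinom p (n+1) 0 + qBinom p (n+1) (0+1) := rfl
  | n+1, k+1, h => by
    rcases Nat.lt_or_ge k n with hk | hk
    · have ih1 := pascal2 n k (by omega)
      have ih2 := pascal2 n (k+1) (by omega)
      have e1 : p ^ (k+1+1) * p ^ (n-(k+1)) = p ^ (n+1) := by
        rw [← pow_add]; congr 1; omega
      have e2 : p ^ (n-k) * p ^ (k+1) = p ^ (n+1) := by
        rw [← pow_add]; congr 1; omega
      have e3 : n+1-(k+1) = n-k := by omega
      calc qBinom p (n+1+1) (k+1+1)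
          = qBinom p (n+1) (k+1) + p ^ (k+1+1) * qBinom p (n+1) (k+1+1) := rfl
        _ = (p ^ (n-k) * qBinom p n k + qBinom p n (k+1))
            + p ^ (k+1+1) * (p ^ (n-(k+1)) * qBinom p n (k+1) + qBinom p n (k+1+1)) := by
            rw [ih1, ih2]
        _ = p ^ (n+1-(k+1)) * (qBinom p n k + p ^ (k+1) * qBinom p n (k+1))
            + (qBinom p n (k+1) + p ^ (k+1+1) * qBinom p n (k+1+1)) := by
            simp only [mul_add, ← mul_assoc, e3, e1, e2]
            abel
        _ = p ^ (n+1-(k+1)) * qBinom p (n+1) (k+1) + qBinom p (n+1) (k+1+1) := rfl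
    · have hk' : k = n := by omega
      subst hk'
      rw [qBinom_diag, qBinom_diag, qBinom_eq_zero p (k+1) (k+1+1) (by omega)]
      simp

lemma qBinom_comm (hpc : ∀ a : A, p * a = a * p) :
    ∀ n k (a : A), qBinom p n k * a = a * qBinom p n k
  | _, 0, a => by simp [qBinom]
  | 0, _+1, a => by simp [qBinom]
  | n+1, k+1, a => by
    rw [qBinom_succ_succ, add_mul, mul_add, qBinom_comm hpc n k a, mul_assoc,
      qBinom_comm hpc n (k+1) a, ← mul_assoc,
      (Commute.pow_left (hpc a) (k+1) : p^(k+1) * a = a * p^(k+1)), mul_assoc]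


end aux

section main
variable {A : Type*} [Ring A] (p x J : A)

lemma hp_pow' (hpc : ∀ a : A, p * a = a * p) (m : ℕ) (a : A) :
    p ^ m * a = a * p ^ m := (Commute.pow_left (hpc a) m)

lemma sum_shift_of_top_zero (f : ℕ → A) (N : ℕ) (h : f (N+1) = 0) :
    ∑ i ∈ Finset.range (N+1), f i = (∑ j ∈ Finset.range (N+1), f (j+1)) + f 0 := by
  have h1 := Finset.sum_range_succ' f (N+1)
  rw [Finset.sum_range_succ f (N+1), h, add_zero] at h1
  exact h1

def qcoef (N : ℕ) : A :=
  ∑ j ∈ Finset.range (N+1), qBinom p N j * (J ^ (N-j) * x ^ j)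

variable (hpc : ∀ a : A, p * a = a * p) (hxJ : x * J = p * (J * x))
include hpc hxJ

lemma x_mul_J_pow : ∀ n, x * J ^ n = p ^ n * (J ^ n * x)
  | 0 => by simp
  | n+1 => by
    calc x * J ^ (n+1) = (x * J ^ n) * J := by rw [pow_succ, ← mul_assoc]
      _ = p ^ n * (J ^ n * (x * J)) := by rw [x_mul_J_pow n, mul_assoc, mul_assoc]
      _ = p ^ n * (J ^ n * (p * (J * x))) := by rw [hxJ]
      _ = p ^ n * (p * (J ^ n * (J * x))) := by rw [← mul_assoc (J^n) p, ← hpc (J^n), mul_assoc]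
      _ = p ^ (n+1) * (J ^ (n+1) * x) := by
          rw [← mul_assoc, ← pow_succ, show J^n*(J*x) = J^(n+1)*x by rw [← mul_assoc, ← pow_succ]]

lemma x_pow_mul_J : ∀ j, x ^ j * J = p ^ j * (J * x ^ j)
  | 0 => by simp
  | j+1 => by
    calc x ^ (j+1) * J = x ^ j * (x * J) := by rw [pow_succ, mul_assoc]
      _ = x ^ j * (p * (J * x)) := by rw [hxJ]
      _ = p * ((x ^ j * J) * x) := by
          rw [← mul_assoc, ← hpc (x^j), mul_assoc, mul_assoc]
      _ = p * ((p ^ j * (J * x ^ j)) * x) := by rw [x_pow_mul_J j]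
      _ = p ^ (j+1) * (J * x ^ (j+1)) := by
          rw [mul_assoc (p^j), ← mul_assoc, ← pow_succ',
            show (J*x^j)*x = J*x^(j+1) by rw [mul_assoc, ← pow_succ]]

lemma hRx (N : ℕ) : qcoef p x J N * x
    = ∑ j ∈ Finset.range (N+1), qBinom p N j * (J ^ (N-j) * x ^ (j+1)) := by
  rw [qcoef, Finset.sum_mul]
  refine Finset.sum_congr rfl fun j hj => ?_
  rw [mul_assoc, mul_assoc, ← pow_succ]

lemma hRJ (N : ℕ) : qcoef p x J N * J
    = ∑ j ∈ Finset.range (N+1), p ^ j * qBinom p N j * (J ^ (N+1-j) * x ^ j) := by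
  rw [qcoef, Finset.sum_mul]
  refine Finset.sum_congr rfl fun j hj => ?_
  have hj' : j ≤ N := by have := Finset.mem_range.mp hj; omega
  calc (qBinom p N j * (J ^ (N-j) * x ^ j)) * J
      = qBinom p N j * (J ^ (N-j) * (x ^ j * J)) := by rw [mul_assoc, mul_assoc]
    _ = qBinom p N j * (J ^ (N-j) * (p ^ j * (J * x ^ j))) := by
        rw [x_pow_mul_J p x J hpc hxJ j]
    _ = qBinom p N j * (p ^ j * (J ^ (N-j) * (J * x ^ j))) := by
        rw [← mul_assoc (J^(N-j)), ← hp_pow' p hpc j (J^(N-j)), mul_assoc]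
    _ = p ^ j * qBinom p N j * (J ^ (N+1-j) * x ^ j) := by
        rw [← mul_assoc, qBinom_comm p hpc N j (p^j),
          show J^(N-j)*(J*x^j) = J^(N+1-j)*x^j by
            rw [← mul_assoc, ← pow_succ, show (N-j)+1 = N+1-j from by omega]]

lemma hLx (N : ℕ) : x * qcoef p x J N
    = ∑ j ∈ Finset.range (N+1), p ^ (N-j) * qBinom p N j * (J ^ (N-j) * x ^ (j+1)) := by
  rw [qcoef, Finset.mul_sum]
  refine Finset.sum_congr rfl fun j hj => ?_
  calc x * (qBinom p N j * (J ^ (N-j) * x ^ j))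
      = qBinom p N j * (x * (J ^ (N-j) * x ^ j)) := by
        rw [← mul_assoc, ← qBinom_comm p hpc N j x, mul_assoc]
    _ = qBinom p N j * ((x * J ^ (N-j)) * x ^ j) := by rw [← mul_assoc x]
    _ = qBinom p N j * ((p ^ (N-j) * (J ^ (N-j) * x)) * x ^ j) := by
        rw [x_mul_J_pow p x J hpc hxJ (N-j)]
    _ = qBinom p N j * (p ^ (N-j) * (J ^ (N-j) * x ^ (j+1))) := by
        rw [mul_assoc (p^(N-j)), mul_assoc (J^(N-j)), ← pow_succ']
    _ = p ^ (N-j) * qBinom p N j * (J ^ (N-j) * x ^ (j+1)) := by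
        rw [← mul_assoc, qBinom_comm p hpc N j (p^(N-j))]

lemma hLJ (N : ℕ) : J * qcoef p x J N
    = ∑ j ∈ Finset.range (N+1), qBinom p N j * (J ^ (N+1-j) * x ^ j) := by
  rw [qcoef, Finset.mul_sum]
  refine Finset.sum_congr rfl fun j hj => ?_
  have hj' : j ≤ N := by have := Finset.mem_range.mp hj; omega
  calc J * (qBinom p N j * (J ^ (N-j) * x ^ j))
      = qBinom p N j * (J * (J ^ (N-j) * x ^ j)) := by
        rw [← mul_assoc, ← qBinom_comm p hpc N j J, mul_assoc]
    _ = qBinom p N j * (J ^ (N+1-j) * x ^ j) := by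
        rw [← mul_assoc J, ← pow_succ', show (N-j)+1 = N+1-j from by omega]

lemma hR (N : ℕ) : qcoef p x J (N+1) = qcoef p x J N * x + qcoef p x J N * J := by
  rw [hRx p x J hpc hxJ N, hRJ p x J hpc hxJ N]
  rw [show qcoef p x J (N+1)
      = ∑ j ∈ Finset.range (N+1+1), qBinom p (N+1) j * (J ^ (N+1-j) * x ^ j) from rfl,
    Finset.sum_range_succ']
  simp only [qBinom_succ_succ, add_mul, Finset.sum_add_distrib, Nat.add_sub_add_right]
  rw [sum_shift_of_top_zero (fun i => p ^ i * qBinom p N i * (J ^ (N+1-i) * x ^ i)) N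
    (by simp [qBinom_eq_zero p N (N+1) (by omega)])]
  simp only [Nat.add_sub_add_right, pow_zero, Nat.sub_zero, one_mul, mul_one, qBinom_zero]
  abel

lemma hL (N : ℕ) : qcoef p x J (N+1) = x * qcoef p x J N + J * qcoef p x J N := by
  rw [hLx p x J hpc hxJ N, hLJ p x J hpc hxJ N]
  rw [show qcoef p x J (N+1)
      = ∑ j ∈ Finset.range (N+1+1), qBinom p (N+1) j * (J ^ (N+1-j) * x ^ j) from rfl,
    Finset.sum_range_succ']
  have hcongr : ∑ j ∈ Finset.range (N+1), qBinom p (N+1) (j+1) * (J ^ (N+1-(j+1)) * x ^ (j+1))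
      = ∑ j ∈ Finset.range (N+1),
          (p ^ (N-j) * qBinom p N j + qBinom p N (j+1)) * (J ^ (N+1-(j+1)) * x ^ (j+1)) := by
    refine Finset.sum_congr rfl fun j hj => ?_
    have hj' : j ≤ N := by have := Finset.mem_range.mp hj; omega
    rw [pascal2 p N j hj']
  rw [hcongr]
  simp only [add_mul, Finset.sum_add_distrib, Nat.add_sub_add_right]
  rw [sum_shift_of_top_zero (fun i => qBinom p N i * (J ^ (N+1-i) * x ^ i)) N
    (by simp [qBinom_eq_zero p N (N+1) (by omega)])]
  simp only [Nat.add_sub_add_right, pow_zero, Nat.sub_zero, one_mul, mul_one, qBinom_zero]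
  abel

end main

open PowerSeries in
/-- If `x * J = p * J * x` with `p` central, then in `R[[t]]`
`(1 - t x - t J)⁻¹ = ∑_{j,n ≥ 0} [j+n choose j]_p (tJ)^n (tx)^j`. -/
theorem jacobi_step_expansion {A : Type*} [Ring A] (p x J : A)
    (hpc : ∀ a : A, p * a = a * p) (hxJ : x * J = p * (J * x)) :
    Ring.inverse (1 - X * C x - X * C J) =
      PowerSeries.mk (fun N =>
        ∑ jn ∈ Finset.HasAntidiagonal.antidiagonal N,
          qBinom p N jn.1 * (J ^ jn.2 * x ^ jn.1)) := by
  have hmk : PowerSeries.mk (fun N =>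
        ∑ jn ∈ Finset.HasAntidiagonal.antidiagonal N,
          qBinom p N jn.1 * (J ^ jn.2 * x ^ jn.1)) = PowerSeries.mk (qcoef p x J) := by
    ext N
    rw [coeff_mk, coeff_mk, Finset.Nat.sum_antidiagonal_eq_sum_range_succ_mk
      (fun jn => qBinom p N jn.1 * (J ^ jn.2 * x ^ jn.1)) N]
    rfl
  rw [hmk]
  set S := PowerSeries.mk (qcoef p x J) with hS
  have coeffS : ∀ n, (coeff n) S = qcoef p x J n := fun n => coeff_mk n _
  have key1 : (1 - X * C x - X * C J) * S = 1 := by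
    ext n
    cases n with
    | zero =>
      simp only [PowerSeries.coeff_zero_eq_constantCoeff, map_mul, map_sub, map_one,
        constantCoeff_X, zero_mul, sub_zero, hS, constantCoeff_mk]
      show (1 : A) * qcoef p x J 0 = 1
      simp [qcoef, qBinom]
    | succ n =>
      rw [sub_mul, sub_mul, one_mul, map_sub, map_sub, mul_assoc X (C x) S,
        mul_assoc X (C J) S, coeff_succ_X_mul, coeff_succ_X_mul, coeff_C_mul, coeff_C_mul,
        coeffS, coeffS]
      rw [hL p x J hpc hxJ n]
      simp only [PowerSeries.coeff_one, if_neg (Nat.succ_ne_zero n)]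
      abel
  have key2 : S * (1 - X * C x - X * C J) = 1 := by
    ext n
    cases n with
    | zero =>
      simp only [PowerSeries.coeff_zero_eq_constantCoeff, map_mul, map_sub, map_one,
        constantCoeff_X, zero_mul, sub_zero, hS, constantCoeff_mk]
      show qcoef p x J 0 * 1 = 1
      simp [qcoef, qBinom]
    | succ n =>
      rw [mul_sub, mul_sub, mul_one, map_sub, map_sub,
        ← (commute_X (C x)).eq, ← (commute_X (C J)).eq,
        ← mul_assoc S (C x) X, ← mul_assoc S (C J) X,
        coeff_succ_mul_X, coeff_succ_mul_X, coeff_mul_C, coeff_mul_C,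
        coeffS, coeffS]
      rw [hR p x J hpc hxJ n]
      simp only [PowerSeries.coeff_one, if_neg (Nat.succ_ne_zero n)]
      abel
  let u : (A⟦X⟧)ˣ := ⟨1 - X * C x - X * C J, S, key1, key2⟩
  calc Ring.inverse (1 - X * C x - X * C J) = Ring.inverse (u : A⟦X⟧) := rfl
    _ = ((u⁻¹ : (A⟦X⟧)ˣ) : A⟦X⟧) := Ring.inverse_unit u
    _ = S := rfl
end

section
/- Let w, J be elements of a complete filtered algebra with w*J = p*J*w for central p. Then for every nonnegative integer m, ((J - 1) w)^m = p^{m(m-1)/2} * phi_m(J) * J^m * w^m, where phi_m(J) = prod_{i=0}^{m-1}(1 - p^i J)^{-1}, assuming J is topologically nilpotent so that the inverses exist. -/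
open PowerSeries

lemma aux_inv_conj {R : Type*} [Ring R] {x u v : R} (hu : IsUnit u) (hv : IsUnit v)
    (h : x * u = v * x) : x * Ring.inverse u = Ring.inverse v * x := by
  calc x * Ring.inverse u
      = Ring.inverse v * v * (x * Ring.inverse u) := by
        rw [Ring.inverse_mul_cancel _ hv, one_mul]
    _ = Ring.inverse v * (x * u * Ring.inverse u) := by rw [h]; noncomm_ring
    _ = Ring.inverse v * x := by rw [mul_assoc, Ring.mul_inverse_cancel _ hu, mul_one]

open PowerSeries in
/-- For `w J = p J w` with `p` central invertible, and `J` made topologically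
nilpotent via the `t`-adic grading (`J ↦ t J` in `A[[t]]`), for every `m ≥ 0`:
`(((1 - tJ)⁻¹ - 1) w)^m = p^{m(m-1)/2} φ_m(tJ) (tJ)^m w^m`, where
`φ_m(z) = ∏_{i=0}^{m-1} (1 - p^i z)^{-1}`. -/
theorem J_minus_one_pow {A : Type*} [Ring A] (p w J : A)
    (hp : IsUnit p) (hpc : ∀ a : A, p * a = a * p)
    (hwJ : w * J = p * (J * w)) (m : ℕ) :
    ((Ring.inverse (1 - X * C (R := A) J) - 1) * C (R := A) w) ^ m =
      C (R := A) (p ^ (m * (m - 1) / 2)) *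
        Ring.inverse (((List.range m).map fun i =>
          (1 : PowerSeries A) - C (R := A) (p ^ i) * (X * C (R := A) J)).prod) *
        (X * C (R := A) J) ^ m * (C (R := A) w) ^ m := by
  set T : PowerSeries A := X * C (R := A) J with hT
  set W : PowerSeries A := C (R := A) w with hW
  set u : ℕ → PowerSeries A := fun i => (1 : PowerSeries A) - C (R := A) (p ^ i) * T with hu
  set P : ℕ → PowerSeries A := fun k => ((List.range k).map u).prod with hP
  have hudef : ∀ i, u i = 1 - C (R := A) (p ^ i) * T := fun _ => rfl
  have hPdef : ∀ k, P k = ((List.range k).map u).prod := fun _ => rfl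
  clear_value T W u P
  -- centrality of `C (p^i)`
  have hCp_comm : ∀ (i : ℕ) (f : PowerSeries A), C (R := A) (p ^ i) * f = f * C (R := A) (p ^ i) := by
    intro i f
    ext n
    simp only [coeff_C_mul, coeff_mul_C]
    induction i with
    | zero => simp
    | succ k ih => rw [pow_succ, mul_assoc, hpc, ← mul_assoc, ih, mul_assoc]
  have hXc : ∀ f : PowerSeries A, X * f = f * X := fun f => (commute_X f).symm
  -- units
  have hui : ∀ i, IsUnit (u i) := by
    intro i
    rw [hudef, isUnit_iff_constantCoeff]
    simp [hT]
  -- basic commutation facts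
  have hWT : W * T = C (R := A) p * (T * W) := by
    calc W * T = X * (C (R := A) w * C (R := A) J) := by
          rw [hW, hT, ← mul_assoc, ← hXc (C (R := A) w), mul_assoc]
      _ = X * C (R := A) (p * (J * w)) := by rw [← map_mul, hwJ]
      _ = C (R := A) p * (T * W) := by
          rw [map_mul, map_mul, hT, hW, ← mul_assoc X, hXc (C (R := A) p)]; noncomm_ring
  have hTu : ∀ i, T * u i = u i * T := by
    intro i
    rw [hudef i, mul_sub, sub_mul, mul_one, one_mul]
    congr 1
    rw [← mul_assoc, ← hCp_comm i T]
  have huu : ∀ i j, u i * u j = u j * u i := by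
    intro i j
    have hab : C (R := A) (p ^ i) * T * (C (R := A) (p ^ j) * T)
        = C (R := A) (p ^ j) * T * (C (R := A) (p ^ i) * T) := by
      calc C (R := A) (p ^ i) * T * (C (R := A) (p ^ j) * T)
          = C (R := A) (p ^ i) * (T * C (R := A) (p ^ j)) * T := by noncomm_ring
        _ = C (R := A) (p ^ i) * (C (R := A) (p ^ j) * T) * T := by rw [← hCp_comm j T]
        _ = C (R := A) (p ^ i) * C (R := A) (p ^ j) * (T * T) := by noncomm_ring
        _ = C (R := A) (p ^ j) * C (R := A) (p ^ i) * (T * T) := by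
            rw [← map_mul, ← map_mul, ← pow_add, ← pow_add, Nat.add_comm i j]
        _ = C (R := A) (p ^ j) * (C (R := A) (p ^ i) * T) * T := by noncomm_ring
        _ = C (R := A) (p ^ j) * (T * C (R := A) (p ^ i)) * T := by rw [hCp_comm i T]
        _ = C (R := A) (p ^ j) * T * (C (R := A) (p ^ i) * T) := by noncomm_ring
    have hc : Commute (u i) (u j) := by
      rw [hudef i, hudef j]
      exact (Commute.one_left _).sub_left ((Commute.one_right _).sub_right hab)
    exact hc.eq
  have hWu : ∀ i, W * u i = u (i + 1) * W := by
    intro i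
    rw [hudef i, hudef (i + 1), mul_sub, sub_mul, mul_one, one_mul]
    congr 1
    calc W * (C (R := A) (p ^ i) * T)
        = (W * C (R := A) (p ^ i)) * T := by rw [← mul_assoc]
      _ = C (R := A) (p ^ i) * (W * T) := by rw [← hCp_comm i W, mul_assoc]
      _ = C (R := A) (p ^ i) * (C (R := A) p * (T * W)) := by rw [hWT]
      _ = (C (R := A) (p ^ i) * C (R := A) p) * T * W := by noncomm_ring
      _ = C (R := A) (p ^ (i + 1)) * T * W := by rw [← map_mul, ← pow_succ]
  have hWpow_u : ∀ (k i : ℕ), W ^ k * u i = u (i + k) * W ^ k := by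
    intro k
    induction k with
    | zero => intro i; simp
    | succ n ih =>
      intro i
      have e : i + 1 + n = i + (n + 1) := by omega
      rw [pow_succ, mul_assoc, hWu i, ← mul_assoc, ih (i + 1), e, mul_assoc]
  have hcentp : ∀ f : PowerSeries A, C (R := A) p * f = f * C (R := A) p := by
    intro f
    have := hCp_comm 1 f
    rwa [pow_one] at this
  have hWpow_T : ∀ k : ℕ, W ^ k * T = C (R := A) (p ^ k) * T * W ^ k := by
    intro k
    induction k with
    | zero => simp
    | succ n ih =>
      calc W ^ (n + 1) * T = W ^ n * (W * T) := by rw [pow_succ]; noncomm_ring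
        _ = W ^ n * (C (R := A) p * (T * W)) := by rw [hWT]
        _ = (W ^ n * C (R := A) p) * (T * W) := by noncomm_ring
        _ = (C (R := A) p * W ^ n) * (T * W) := by rw [← hcentp (W ^ n)]
        _ = C (R := A) p * (W ^ n * T) * W := by noncomm_ring
        _ = C (R := A) p * (C (R := A) (p ^ n) * T * W ^ n) * W := by rw [ih]
        _ = (C (R := A) p * C (R := A) (p ^ n)) * T * W ^ (n + 1) := by rw [pow_succ]; noncomm_ring
        _ = C (R := A) (p ^ (n + 1)) * T * W ^ (n + 1) := by rw [← map_mul, ← pow_succ']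
  -- products
  have hPsucc : ∀ k, P (k + 1) = P k * u k := by
    intro k
    rw [hPdef, hPdef, List.range_succ]
    simp
  have hPu : ∀ k, IsUnit (P k) := by
    intro k
    induction k with
    | zero => rw [hPdef]; simp
    | succ n ih => rw [hPsucc]; exact ih.mul (hui n)
  have hPuc : ∀ k i, P k * u i = u i * P k := by
    intro k i
    induction k with
    | zero => rw [hPdef]; simp
    | succ n ih => rw [hPsucc, mul_assoc, huu n i, ← mul_assoc, ih, mul_assoc]
  -- main claim
  suffices H : ∀ k, ((Ring.inverse (1 - T) - 1) * W) ^ k =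
      C (R := A) (p ^ (k * (k - 1) / 2)) * Ring.inverse (P k) * T ^ k * W ^ k by
    have h := H m
    rwa [hPdef m] at h
  intro k
  induction k with
  | zero => rw [hPdef]; simp
  | succ n ih =>
    have h0 : u 0 = 1 - T := by rw [hudef]; simp
    have hstep : (Ring.inverse ((1 : PowerSeries A) - T) - 1) * W
        = Ring.inverse (u 0) * T * W := by
      congr 1
      rw [← h0]
      have hc := Ring.inverse_mul_cancel (u 0) (hui 0)
      have hTeq : T = 1 - u 0 := by rw [h0, sub_sub_cancel]
      calc Ring.inverse (u 0) - 1
          = Ring.inverse (u 0) - Ring.inverse (u 0) * u 0 := by rw [hc]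
        _ = Ring.inverse (u 0) * (1 - u 0) := by rw [mul_one_sub]
        _ = Ring.inverse (u 0) * T := by rw [← hTeq]
    have h1 : W ^ n * Ring.inverse (u 0) = Ring.inverse (u n) * W ^ n := by
      refine aux_inv_conj (hui 0) (hui n) ?_
      have := hWpow_u n 0
      rwa [Nat.zero_add] at this
    have h2 : T ^ n * Ring.inverse (u n) = Ring.inverse (u n) * T ^ n := by
      refine aux_inv_conj (hui n) (hui n) ?_
      have hcT : Commute T (u n) := hTu n
      exact (hcT.pow_left n).eq
    have hx : u n * Ring.inverse (P n) = Ring.inverse (P n) * u n :=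
      aux_inv_conj (hPu n) (hPu n) (hPuc n n).symm
    have f4 : Ring.inverse (P n) * Ring.inverse (u n) = Ring.inverse (P (n + 1)) := by
      rw [aux_inv_conj (hui n) (hui n) hx.symm, hPsucc n,
        Ring.mul_inverse_rev' (show Commute (P n) (u n) from hPuc n n)]
    have harith : (n + 1) * ((n + 1) - 1) / 2 = n * (n - 1) / 2 + n := by
      rw [← Finset.sum_range_id, ← Finset.sum_range_id, Finset.sum_range_succ]
    rw [pow_succ, ih, hstep, harith]
    calc C (R := A) (p ^ (n * (n - 1) / 2)) * Ring.inverse (P n) * T ^ n * W ^ n *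
          (Ring.inverse (u 0) * T * W)
        = C (R := A) (p ^ (n * (n - 1) / 2)) * Ring.inverse (P n) * T ^ n *
            (W ^ n * Ring.inverse (u 0) * T * W) := by noncomm_ring
      _ = C (R := A) (p ^ (n * (n - 1) / 2)) * Ring.inverse (P n) * T ^ n *
            (Ring.inverse (u n) * W ^ n * T * W) := by rw [h1]
      _ = C (R := A) (p ^ (n * (n - 1) / 2)) * Ring.inverse (P n) * T ^ n *
            (Ring.inverse (u n) * (W ^ n * T) * W) := by rw [mul_assoc (Ring.inverse (u n))]
      _ = C (R := A) (p ^ (n * (n - 1) / 2)) * Ring.inverse (P n) * T ^ n *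
            (Ring.inverse (u n) * (C (R := A) (p ^ n) * T * W ^ n) * W) := by rw [hWpow_T n]
      _ = C (R := A) (p ^ (n * (n - 1) / 2)) * (Ring.inverse (P n) * (T ^ n * Ring.inverse (u n))) *
            (C (R := A) (p ^ n) * (T * (W ^ n * W))) := by noncomm_ring
      _ = C (R := A) (p ^ (n * (n - 1) / 2)) * (Ring.inverse (P n) * (Ring.inverse (u n) * T ^ n)) *
            (C (R := A) (p ^ n) * (T * W ^ (n + 1))) := by rw [h2, ← pow_succ]
      _ = C (R := A) (p ^ (n * (n - 1) / 2)) * (Ring.inverse (P n) * Ring.inverse (u n)) *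
            (T ^ n * (C (R := A) (p ^ n) * (T * W ^ (n + 1)))) := by noncomm_ring
      _ = C (R := A) (p ^ (n * (n - 1) / 2)) * Ring.inverse (P (n + 1)) *
            (T ^ n * (C (R := A) (p ^ n) * (T * W ^ (n + 1)))) := by rw [f4]
      _ = C (R := A) (p ^ (n * (n - 1) / 2)) * Ring.inverse (P (n + 1)) *
            ((T ^ n * C (R := A) (p ^ n)) * (T * W ^ (n + 1))) := by rw [← mul_assoc (T ^ n)]
      _ = C (R := A) (p ^ (n * (n - 1) / 2)) * Ring.inverse (P (n + 1)) *
            ((C (R := A) (p ^ n) * T ^ n) * (T * W ^ (n + 1))) := by rw [← hCp_comm n (T ^ n)]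
      _ = C (R := A) (p ^ (n * (n - 1) / 2)) * (Ring.inverse (P (n + 1)) * C (R := A) (p ^ n)) *
            ((T ^ n * T) * W ^ (n + 1)) := by noncomm_ring
      _ = C (R := A) (p ^ (n * (n - 1) / 2)) * (C (R := A) (p ^ n) * Ring.inverse (P (n + 1))) *
            (T ^ (n + 1) * W ^ (n + 1)) := by
          rw [← hCp_comm n (Ring.inverse (P (n + 1))), ← pow_succ]
      _ = (C (R := A) (p ^ (n * (n - 1) / 2)) * C (R := A) (p ^ n)) * Ring.inverse (P (n + 1)) *
            T ^ (n + 1) * W ^ (n + 1) := by noncomm_ring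
      _ = C (R := A) (p ^ (n * (n - 1) / 2 + n)) * Ring.inverse (P (n + 1)) *
            T ^ (n + 1) * W ^ (n + 1) := by rw [← map_mul, ← pow_add]
end

section
/- Define the noncommutative Stieltjes continued fraction S_k(x_k,...,x_N) by S_{N+1} = 1 and S_k = (1 - S_{k+1} x_k)^{-1}, with x_i = t y_i for central t, in a ring where y_i y_{i+1} = p y_{i+1} y_i and y_i y_j = y_j y_i for |i-j| >= 2 (p central). Then S_1 = sum over nonnegative integers ell_1,...,ell_N of prod_{i=1}^{N-1} [ell_i + ell_{i+1} - 1 choose ell_{i+1}]_p times (t y_N)^{ell_N} (t y_{N-1})^{ell_{N-1}} ... (t y_1)^{ell_1}, as formal power series in t, with the convention [-1 choose 0]_p = 1. -/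
/-- The noncommutative Stieltjes continued fraction: `stieltjesCF y n k` is `S_k`
computed with `n` remaining levels, i.e. `S_k = (1 - S_{k+1} t y_k)⁻¹` and the
innermost value is `1`.  (Indices are 0-based: `y 0,…,y (N-1)` are `y_1,…,y_N`.) -/
noncomputable def stieltjesCF {A : Type*} [Ring A] (y : ℕ → A) : ℕ → ℕ → PowerSeries A
  | 0, _ => 1
  | n + 1, k =>
      Ring.inverse (1 - stieltjesCF y n (k + 1) * (PowerSeries.X * PowerSeries.C (y k)))

namespace StieltjesAux

variable {A : Type*} [Ring A]

/- ### qBinom lemmas -/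

@[simp] lemma qBinom_zero_right (p : A) (n : ℕ) : qBinom p n 0 = 1 := by
  cases n <;> rfl

@[simp] lemma qBinom_zero_succ (p : A) (k : ℕ) : qBinom p 0 (k + 1) = 0 := rfl

lemma qBinom_succ_succ (p : A) (n k : ℕ) :
    qBinom p (n + 1) (k + 1) = qBinom p n k + p ^ (k + 1) * qBinom p n (k + 1) := rfl

lemma qBinom_eq_zero (p : A) : ∀ {n k : ℕ}, n < k → qBinom p n k = 0
  | 0, _ + 1, _ => rfl
  | n + 1, k + 1, h => by
    rw [qBinom_succ_succ, qBinom_eq_zero p (by omega), qBinom_eq_zero p (by omega),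
      mul_zero, add_zero]

lemma qBinom_self (p : A) : ∀ n, qBinom p n n = 1
  | 0 => rfl
  | n + 1 => by
    rw [qBinom_succ_succ, qBinom_self p n, qBinom_eq_zero p (by omega), mul_zero, add_zero]

lemma qBinom_commute (p : A) (hpc : ∀ a : A, p * a = a * p) :
    ∀ (n k : ℕ) (a : A), qBinom p n k * a = a * qBinom p n k := by
  intro n
  induction n with
  | zero => intro k a; cases k <;> simp
  | succ n ih =>
    intro k a
    cases k with
    | zero => simp
    | succ k =>
      have hp : ∀ (c : ℕ) (b : A), p ^ c * b = b * p ^ c := fun c => by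
        induction c with
        | zero => simp
        | succ c ihc => intro b; rw [pow_succ, mul_assoc, hpc, ← mul_assoc, ihc, mul_assoc]
      rw [qBinom_succ_succ, add_mul, mul_add, ih, mul_assoc, ih, ← mul_assoc, hp, mul_assoc]

/-- rule B : `[n+1, k+1] = [n, k+1] + p^(n-k) [n, k]`. -/
lemma qBinom_pascal' (p : A) : ∀ n k : ℕ,
    qBinom p (n + 1) (k + 1) = qBinom p n (k + 1) + p ^ (n - k) * qBinom p n k := by
  intro n
  induction n with
  | zero =>
    intro k
    cases k with
    | zero => simp [qBinom_succ_succ]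
    | succ k => simp [qBinom_succ_succ]
  | succ n ih =>
    intro k
    cases k with
    | zero =>
      have L : qBinom p (n + 1 + 1) (0 + 1)
          = 1 + p ^ (0 + 1) * (qBinom p n (0 + 1) + p ^ (n - 0) * qBinom p n 0) := by
        rw [qBinom_succ_succ, ih 0, qBinom_zero_right]
      have R : qBinom p (n + 1) (0 + 1) = qBinom p n 0 + p ^ (0 + 1) * qBinom p n (0 + 1) :=
        qBinom_succ_succ p n 0
      rw [L, R]
      simp only [Nat.sub_zero, qBinom_zero_right, pow_succ, pow_zero, one_mul, mul_one,
        mul_add, ← mul_assoc]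
      rw [← pow_succ', pow_succ]
      abel
    | succ k =>
      rcases lt_or_ge k n with hkn | hkn
      · have L : qBinom p (n + 1 + 1) (k + 1 + 1)
            = (qBinom p n (k + 1) + p ^ (n - k) * qBinom p n k)
              + p ^ (k + 1 + 1) * (qBinom p n (k + 1 + 1)
                + p ^ (n - (k + 1)) * qBinom p n (k + 1)) := by
          rw [qBinom_succ_succ, ih k, ih (k + 1)]
        have R1 : qBinom p (n + 1) (k + 1 + 1)
            = qBinom p n (k + 1) + p ^ (k + 1 + 1) * qBinom p n (k + 1 + 1) :=
          qBinom_succ_succ p n (k + 1)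
        have R2 : qBinom p (n + 1) (k + 1)
            = qBinom p n k + p ^ (k + 1) * qBinom p n (k + 1) := qBinom_succ_succ p n k
        rw [L, R1, R2]
        simp only [mul_add, ← mul_assoc, ← pow_add]
        have e1 : k + 1 + 1 + (n - (k + 1)) = n + 1 := by omega
        have e2 : n + 1 - (k + 1) = n - k := by omega
        have e3 : n - k + (k + 1) = n + 1 := by omega
        rw [e1, e2, e3]
        abel
      · rcases eq_or_lt_of_le hkn with heq | hlt
        · subst heq
          rw [qBinom_self, qBinom_eq_zero p (by omega), qBinom_self, Nat.sub_self,
            pow_zero, one_mul, zero_add]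
        · rw [qBinom_eq_zero p (by omega), qBinom_eq_zero p (by omega),
            qBinom_eq_zero p (by omega), mul_zero, add_zero]

/- ### PowerSeries helpers -/

open PowerSeries

lemma C_comm_of_comm {a : A} (h : ∀ b : A, a * b = b * a) (f : PowerSeries A) :
    C a * f = f * C a := by
  ext T
  rw [coeff_C_mul, coeff_mul_C, h]

lemma X_comm (f : PowerSeries A) : X * f = f * X := (commute_X f).symm.eq

lemma isUnit_one_sub_of_cc {u : PowerSeries A} (h : constantCoeff u = 0) :
    IsUnit (1 - u) := by
  rw [PowerSeries.isUnit_iff_constantCoeff, map_sub, map_one, h, sub_zero]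
  exact isUnit_one

lemma inverse_intertwine (a F F' : PowerSeries A) (hF : IsUnit F) (hF' : IsUnit F')
    (h : a * F = F' * a) : a * Ring.inverse F = Ring.inverse F' * a := by
  obtain ⟨u, rfl⟩ := hF
  obtain ⟨u', rfl⟩ := hF'
  rw [Ring.inverse_unit, Ring.inverse_unit]
  have key : a = ↑u'⁻¹ * a * ↑u := by
    rw [mul_assoc, h, ← mul_assoc, Units.inv_mul, one_mul]
  conv_lhs => rw [key]
  rw [mul_assoc, Units.mul_inv, mul_one]

lemma coeff_mul_CX (f : PowerSeries A) (a : A) (T : ℕ) :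
    (coeff T) (f * (C a * X)) = if T = 0 then 0 else coeff (T - 1) f * a := by
  rw [← mul_assoc]
  cases T with
  | zero =>
    rw [coeff_zero_eq_constantCoeff, map_mul, constantCoeff_X, mul_zero, if_pos rfl]
  | succ T =>
    rw [coeff_succ_mul_X, coeff_mul_C]
    simp

/- ### update and window lemmas for stieltjesCF -/

/-- `upd y j c` rescales `y j` by the (central) factor `c`. -/
def upd (y : ℕ → A) (j : ℕ) (c : A) : ℕ → A := fun i => if i = j then c * y i else y i

@[simp] lemma upd_same (y : ℕ → A) (j : ℕ) (c : A) : upd y j c j = c * y j := if_pos rfl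

lemma upd_ne (y : ℕ → A) (j : ℕ) (c : A) {i : ℕ} (h : i ≠ j) : upd y j c i = y i := if_neg h

lemma upd_upd (y : ℕ → A) (j : ℕ) (c c' : A) :
    upd (upd y j c') j c = upd y j (c * c') := by
  funext i
  by_cases h : i = j
  · subst h; simp [upd, mul_assoc]
  · simp [upd, h]

lemma stieltjesCF_congr : ∀ (n k : ℕ) (y y' : ℕ → A),
    (∀ i, k ≤ i → i < k + n → y i = y' i) → stieltjesCF y n k = stieltjesCF y' n k
  | 0, _, _, _, _ => rfl
  | n + 1, k, y, y', h => by
    rw [stieltjesCF, stieltjesCF,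
      stieltjesCF_congr n (k + 1) y y' (fun i h1 h2 => h i (by omega) (by omega)),
      h k (le_refl k) (by omega)]

lemma constantCoeff_sub_prod (S : PowerSeries A) (g : PowerSeries A)
    (hg : constantCoeff g = 0) : IsUnit (1 - S * g) :=
  isUnit_one_sub_of_cc (by rw [map_mul, hg, mul_zero])

lemma isUnit_stieltjes_factor (S : PowerSeries A) (b : A) :
    IsUnit (1 - S * (X * C b)) :=
  constantCoeff_sub_prod S _ (by rw [map_mul, constantCoeff_X, zero_mul])

lemma isUnit_stieltjes_factor' (S : PowerSeries A) (b : A) :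
    IsUnit (1 - S * (C b * X)) :=
  constantCoeff_sub_prod S _ (by rw [map_mul, constantCoeff_X, mul_zero])

/-- An element commuting with the window variables commutes with the continued fraction. -/
lemma comm_stieltjesCF (a : A) : ∀ (n k : ℕ) (y : ℕ → A),
    (∀ i, k ≤ i → i < k + n → a * y i = y i * a) →
    C a * stieltjesCF y n k = stieltjesCF y n k * C a
  | 0, _, _, _ => by rw [stieltjesCF, mul_one, one_mul]
  | n + 1, k, y, h => by
    rw [stieltjesCF]
    refine inverse_intertwine _ _ _ (isUnit_stieltjes_factor _ _)
      (isUnit_stieltjes_factor _ _) ?_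
    rw [mul_sub, sub_mul, mul_one, one_mul, ← mul_assoc,
      comm_stieltjesCF a n (k + 1) y (fun i h1 h2 => h i (by omega) (by omega)), mul_assoc]
    have hE : C a * (X * C (y k)) = X * C (y k) * C a := by
      rw [← mul_assoc, ← X_comm, mul_assoc, ← map_mul, h k (le_refl k) (by omega), map_mul,
        ← mul_assoc]
    rw [hE, ← mul_assoc]

/-- The key commutation: moving `y k` from the left of `S_{k+1}` to the right rescales
`y (k+1)` by `p`. -/
lemma swap_stieltjesCF (p : A) (hpc : ∀ a : A, p * a = a * p) :
    ∀ (n k : ℕ) (y : ℕ → A),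
    (0 < n → y k * y (k + 1) = p * (y (k + 1) * y k)) →
    (∀ i, k + 2 ≤ i → i < k + 1 + n → y k * y i = y i * y k) →
    C (y k) * stieltjesCF y n (k + 1) = stieltjesCF (upd y (k + 1) p) n (k + 1) * C (y k)
  | 0, _, _, _, _ => by rw [stieltjesCF, stieltjesCF, mul_one, one_mul]
  | n + 1, k, y, hadj, hcomm => by
    rw [stieltjesCF, stieltjesCF]
    have hupd : stieltjesCF (upd y (k + 1) p) n (k + 2) = stieltjesCF y n (k + 2) :=
      stieltjesCF_congr n (k + 2) _ y (fun i h1 _ => upd_ne y (k + 1) p (by omega))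
    rw [hupd, upd_same]
    refine inverse_intertwine _ _ _ (isUnit_stieltjes_factor _ _)
      (isUnit_stieltjes_factor _ _) ?_
    rw [mul_sub, sub_mul, mul_one, one_mul, ← mul_assoc,
      comm_stieltjesCF (y k) n (k + 2) y (fun i h1 h2 => hcomm i (by omega) (by omega)),
      mul_assoc]
    have hE : C (y k) * (X * C (y (k + 1))) = X * C (p * y (k + 1)) * C (y k) := by
      rw [← mul_assoc, ← X_comm, mul_assoc, ← map_mul, hadj (by omega),
        ← mul_assoc p (y (k + 1)) (y k), map_mul, ← mul_assoc]
    rw [hE, ← mul_assoc]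

lemma pow_central {p : A} (hpc : ∀ a : A, p * a = a * p) (c : ℕ) (a : A) :
    p ^ c * a = a * p ^ c := by
  induction c with
  | zero => simp
  | succ c ihc => rw [pow_succ, mul_assoc, hpc, ← mul_assoc, ihc, mul_assoc]

@[simp] lemma upd_one (y : ℕ → A) (j : ℕ) : upd y j 1 = y := by
  funext i
  by_cases h : i = j <;> simp [upd, h]

lemma swap_pow_stieltjesCF (p : A) (hpc : ∀ a : A, p * a = a * p) :
    ∀ (M : ℕ) (n k : ℕ) (y : ℕ → A),
    (0 < n → y k * y (k + 1) = p * (y (k + 1) * y k)) →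
    (∀ i, k + 2 ≤ i → i < k + 1 + n → y k * y i = y i * y k) →
    C (y k ^ M) * stieltjesCF y n (k + 1)
      = stieltjesCF (upd y (k + 1) (p ^ M)) n (k + 1) * C (y k ^ M)
  | 0, n, k, y, hadj, hcomm => by simp [pow_zero]
  | M + 1, n, k, y, hadj, hcomm => by
    have hyk : upd y (k + 1) (p ^ M) k = y k := upd_ne _ _ _ (by omega)
    have ih := swap_pow_stieltjesCF p hpc M n k y hadj hcomm
    have hadj' : 0 < n → upd y (k + 1) (p ^ M) k * upd y (k + 1) (p ^ M) (k + 1)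
        = p * (upd y (k + 1) (p ^ M) (k + 1) * upd y (k + 1) (p ^ M) k) := by
      intro hn
      rw [hyk, upd_same, ← mul_assoc, ← pow_central hpc M (y k), mul_assoc, hadj hn,
        ← mul_assoc, ← mul_assoc, pow_central hpc M p, mul_assoc, mul_assoc, mul_assoc]
    have hcomm' : ∀ i, k + 2 ≤ i → i < k + 1 + n →
        upd y (k + 1) (p ^ M) k * upd y (k + 1) (p ^ M) i
          = upd y (k + 1) (p ^ M) i * upd y (k + 1) (p ^ M) k := by
      intro i h1 h2
      rw [hyk, upd_ne _ _ _ (by omega : i ≠ k + 1), hcomm i h1 h2]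
    have sw := swap_stieltjesCF p hpc n k (upd y (k + 1) (p ^ M)) hadj' hcomm'
    rw [hyk] at sw
    calc C (y k ^ (M + 1)) * stieltjesCF y n (k + 1)
        = C (y k) * (C (y k ^ M) * stieltjesCF y n (k + 1)) := by
          rw [← mul_assoc, ← map_mul, ← pow_succ']
      _ = C (y k) * stieltjesCF (upd y (k + 1) (p ^ M)) n (k + 1) * C (y k ^ M) := by
          rw [ih, mul_assoc]
      _ = stieltjesCF (upd (upd y (k + 1) (p ^ M)) (k + 1) p) n (k + 1)
            * (C (y k) * C (y k ^ M)) := by rw [sw, mul_assoc]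
      _ = stieltjesCF (upd y (k + 1) (p ^ (M + 1))) n (k + 1) * C (y k ^ (M + 1)) := by
          rw [upd_upd, ← map_mul, ← pow_succ', ← pow_succ']

/- ### the auxiliary product `phi` -/

noncomputable def phi (p : A) (y : ℕ → A) : ℕ → ℕ → ℕ → PowerSeries A
  | 0, _, _ => 1
  | n + 1, k, m =>
      ((List.range m).map fun j =>
        Ring.inverse (1 - stieltjesCF y n (k + 1) * (C (p ^ j * y k) * X))).prod

@[simp] lemma phi_zero (p : A) (y : ℕ → A) (k m : ℕ) : phi p y 0 k m = 1 := rfl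

@[simp] lemma phi_succ_zero (p : A) (y : ℕ → A) (n k : ℕ) : phi p y (n + 1) k 0 = 1 := by
  rw [phi]
  simp

lemma phi_succ_succ (p : A) (y : ℕ → A) (n k m : ℕ) :
    phi p y (n + 1) k (m + 1) = phi p y (n + 1) k m
      * Ring.inverse (1 - stieltjesCF y n (k + 1) * (C (p ^ m * y k) * X)) := by
  rw [phi, phi, List.range_succ, List.map_append, List.prod_append]
  simp

lemma stieltjesCF_eq_phi_one (p : A) (y : ℕ → A) (n k : ℕ) :
    stieltjesCF y n k = phi p y n k 1 := by
  cases n with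
  | zero => rfl
  | succ n =>
    rw [stieltjesCF, phi]
    have h1 : List.range 1 = [0] := rfl
    rw [h1]
    simp only [List.map_cons, List.map_nil, List.prod_cons, List.prod_nil,
      mul_one, pow_zero, one_mul]
    rw [X_comm (C (y k))]

lemma phi_step_factor (p : A) (y : ℕ → A) (n k M : ℕ) :
    phi p y n (k + 1) M * stieltjesCF (upd y (k + 1) (p ^ M)) n (k + 1)
      = phi p y n (k + 1) (M + 1) := by
  cases n with
  | zero => rw [phi_zero, phi_zero, stieltjesCF, one_mul]
  | succ n =>
    rw [phi_succ_succ, stieltjesCF]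
    congr 2
    rw [stieltjesCF_congr n (k + 2) (upd y (k + 1) (p ^ M)) y
      (fun i h1 _ => upd_ne _ _ _ (by omega)), upd_same, X_comm (C (p ^ M * y (k + 1)))]

/- ### the coefficients and monomials -/

def coefAux (p : A) : ℕ → (n : ℕ) → (Fin n → ℕ) → A
  | _, 0, _ => 1
  | m, n + 1, ℓ => qBinom p (m + ℓ 0 - 1) (ℓ 0) * coefAux p (ℓ 0) n (Fin.tail ℓ)

def mon (y : ℕ → A) (k : ℕ) (n : ℕ) (ℓ : Fin n → ℕ) : A :=
  ((List.ofFn fun i : Fin n => y (k + (i : ℕ)) ^ ℓ i).reverse).prod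

lemma coefAux_cons (p : A) (m : ℕ) {n : ℕ} (a : ℕ) (x : Fin n → ℕ) :
    coefAux p m (n + 1) (Fin.cons a x) = qBinom p (m + a - 1) a * coefAux p a n x := by
  rw [coefAux]
  simp [Fin.tail_cons]

lemma mon_cons (y : ℕ → A) (k : ℕ) {n : ℕ} (a : ℕ) (x : Fin n → ℕ) :
    mon y k (n + 1) (Fin.cons a x) = mon y (k + 1) n x * y k ^ a := by
  rw [mon, mon, List.ofFn_succ]
  simp only [Fin.cons_zero, Fin.cons_succ, Fin.val_succ, Fin.val_zero, Nat.add_zero]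
  rw [List.reverse_cons, List.prod_append, List.prod_cons, List.prod_nil, mul_one]
  have hfun : (fun i : Fin n => y (k + ((i : ℕ) + 1)) ^ x i)
      = fun i : Fin n => y (k + 1 + (i : ℕ)) ^ x i := by
    funext i
    have : k + ((i : ℕ) + 1) = k + 1 + (i : ℕ) := by omega
    rw [this]
  rw [hfun]

lemma mon_zero_tuple (y : ℕ → A) (k n : ℕ) : mon y k n 0 = 1 := by
  rw [mon]
  have : (List.ofFn fun i : Fin n => y (k + (i : ℕ)) ^ (0 : Fin n → ℕ) i)
      = List.replicate n 1 := by
    rw [List.eq_replicate_iff]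
    constructor
    · simp
    · intro b hb
      rw [List.mem_ofFn] at hb
      obtain ⟨i, rfl⟩ := hb
      simp
  rw [this]
  simp

lemma coefAux_zero_left (p : A) : ∀ (n : ℕ) (ℓ : Fin n → ℕ),
    coefAux p 0 n ℓ = if ℓ = 0 then 1 else 0
  | 0, ℓ => by
    rw [coefAux]
    rw [if_pos (funext fun i => i.elim0)]
  | n + 1, ℓ => by
    rw [coefAux]
    rcases Nat.eq_zero_or_pos (ℓ 0) with h0 | h0
    · rw [h0, coefAux_zero_left p n (Fin.tail ℓ)]
      simp only [Nat.zero_add, Nat.zero_sub, qBinom_zero_right, one_mul]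
      by_cases ht : Fin.tail ℓ = 0
      · rw [if_pos ht, if_pos]
        rw [← Fin.cons_self_tail ℓ, h0, ht]
        exact funext fun i => Fin.cases rfl (fun j => rfl) i
      · rw [if_neg ht, if_neg]
        intro hℓ
        refine ht (funext fun i => ?_)
        rw [show Fin.tail ℓ i = ℓ i.succ from rfl, hℓ]
        rfl
    · rw [qBinom_eq_zero p (by omega), zero_mul, if_neg]
      intro hℓ
      rw [hℓ] at h0
      simp at h0

/- ### summing over antidiagonal tuples -/

lemma sum_adT_succ {M : Type*} [AddCommMonoid M] (n T : ℕ) (f : (Fin (n + 1) → ℕ) → M) :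
    ∑ ℓ ∈ Finset.Nat.antidiagonalTuple (n + 1) T, f ℓ
      = ∑ ab ∈ Finset.HasAntidiagonal.antidiagonal T,
          ∑ x ∈ Finset.Nat.antidiagonalTuple n ab.2, f (Fin.cons ab.1 x) := by
  rw [Finset.sum_sigma' (Finset.HasAntidiagonal.antidiagonal T)
    (fun ab => Finset.Nat.antidiagonalTuple n ab.2) (fun ab x => f (Fin.cons ab.1 x))]
  refine (Finset.sum_nbij' (i := fun (s : Σ _ : ℕ × ℕ, (Fin n → ℕ)) => Fin.cons s.1.1 s.2)
    (j := fun (ℓ : Fin (n + 1) → ℕ) => ⟨(ℓ 0, T - ℓ 0), Fin.tail ℓ⟩) ?_ ?_ ?_ ?_ ?_).symm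
  · intro s hs
    simp only [Finset.mem_sigma, Finset.HasAntidiagonal.mem_antidiagonal] at hs
    rw [Finset.Nat.mem_antidiagonalTuple, Fin.sum_cons,
      Finset.Nat.mem_antidiagonalTuple.mp hs.2]
    exact hs.1
  · intro ℓ hℓ
    have hℓ' := Finset.Nat.mem_antidiagonalTuple.mp hℓ
    have hsum : ℓ 0 + ∑ i, Fin.tail ℓ i = T := by
      rw [← Fin.sum_cons, Fin.cons_self_tail, hℓ']
    simp only [Finset.mem_sigma, Finset.HasAntidiagonal.mem_antidiagonal, Finset.Nat.mem_antidiagonalTuple]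
    exact ⟨by omega, by omega⟩
  · intro s hs
    obtain ⟨⟨a, b⟩, x⟩ := s
    simp only [Finset.mem_sigma, Finset.HasAntidiagonal.mem_antidiagonal] at hs
    dsimp only
    rw [Fin.cons_zero, Fin.tail_cons]
    have hb : T - a = b := by omega
    rw [hb]
  · intro ℓ hℓ
    exact Fin.cons_self_tail ℓ
  · intro s hs
    rfl

lemma sum_antidiagonal_assoc {M : Type*} [AddCommMonoid M] (T : ℕ) (F : ℕ → ℕ → ℕ → M) :
    ∑ cd ∈ Finset.HasAntidiagonal.antidiagonal T, ∑ ab ∈ Finset.HasAntidiagonal.antidiagonal cd.1, F ab.1 ab.2 cd.2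
      = ∑ ae ∈ Finset.HasAntidiagonal.antidiagonal T, ∑ bd ∈ Finset.HasAntidiagonal.antidiagonal ae.2, F ae.1 bd.1 bd.2 := by
  rw [Finset.sum_sigma' (Finset.HasAntidiagonal.antidiagonal T)
    (fun cd => Finset.HasAntidiagonal.antidiagonal cd.1) (fun cd ab => F ab.1 ab.2 cd.2),
    Finset.sum_sigma' (Finset.HasAntidiagonal.antidiagonal T)
    (fun ae => Finset.HasAntidiagonal.antidiagonal ae.2) (fun ae bd => F ae.1 bd.1 bd.2)]
  refine Finset.sum_nbij'
    (i := fun (x : Σ _ : ℕ × ℕ, ℕ × ℕ) => (⟨(x.2.1, x.2.2 + x.1.2), (x.2.2, x.1.2)⟩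
      : Σ _ : ℕ × ℕ, ℕ × ℕ))
    (j := fun (x : Σ _ : ℕ × ℕ, ℕ × ℕ) => (⟨(x.1.1 + x.2.1, x.2.2), (x.1.1, x.2.1)⟩
      : Σ _ : ℕ × ℕ, ℕ × ℕ)) ?_ ?_ ?_ ?_ ?_
  · intro x hx
    obtain ⟨⟨c, d⟩, ⟨a, b⟩⟩ := x
    simp only [Finset.mem_sigma, Finset.HasAntidiagonal.mem_antidiagonal] at hx
    dsimp only
    simp only [Finset.mem_sigma, Finset.HasAntidiagonal.mem_antidiagonal]
    exact ⟨by omega, trivial⟩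
  · intro x hx
    obtain ⟨⟨a, e⟩, ⟨b, d⟩⟩ := x
    simp only [Finset.mem_sigma, Finset.HasAntidiagonal.mem_antidiagonal] at hx
    dsimp only
    simp only [Finset.mem_sigma, Finset.HasAntidiagonal.mem_antidiagonal]
    exact ⟨by omega, trivial⟩
  · intro x hx
    obtain ⟨⟨c, d⟩, ⟨a, b⟩⟩ := x
    simp only [Finset.mem_sigma, Finset.HasAntidiagonal.mem_antidiagonal] at hx
    obtain ⟨h1, h2⟩ := hx
    subst h2
    rfl
  · intro x hx
    obtain ⟨⟨a, e⟩, ⟨b, d⟩⟩ := x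
    simp only [Finset.mem_sigma, Finset.HasAntidiagonal.mem_antidiagonal] at hx
    obtain ⟨h1, h2⟩ := hx
    subst h2
    rfl
  · intro x hx
    rfl

lemma phiForm (p : A) (n k : ℕ) (y : ℕ → A)
    (ihn : ∀ m T, (coeff T) (phi p y n (k + 1) m)
      = ∑ ℓ ∈ Finset.Nat.antidiagonalTuple n T, coefAux p m n ℓ * mon y (k + 1) n ℓ)
    (m' T' : ℕ) :
    ∑ ℓ ∈ Finset.Nat.antidiagonalTuple (n + 1) T', coefAux p m' (n + 1) ℓ * mon y k (n + 1) ℓ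
      = ∑ ab ∈ Finset.HasAntidiagonal.antidiagonal T', qBinom p (m' + ab.1 - 1) ab.1
          * (coeff ab.2) (phi p y n (k + 1) ab.1) * y k ^ ab.1 := by
  rw [sum_adT_succ n T' (fun ℓ => coefAux p m' (n + 1) ℓ * mon y k (n + 1) ℓ)]
  refine Finset.sum_congr rfl fun ab _ => ?_
  rw [ihn ab.1 ab.2, Finset.mul_sum, Finset.sum_mul]
  refine Finset.sum_congr rfl fun x _ => ?_
  rw [coefAux_cons, mon_cons, mul_assoc,
    ← mul_assoc (coefAux p ab.1 n x) (mon y (k + 1) n x) (y k ^ ab.1), ← mul_assoc]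

/-- The claimed expansion as a power series. -/
noncomputable def Wser (p : A) (y : ℕ → A) (n k m : ℕ) : PowerSeries A :=
  PowerSeries.mk fun T => ∑ ℓ ∈ Finset.Nat.antidiagonalTuple n T, coefAux p m n ℓ * mon y k n ℓ

lemma coeff_Wser (p : A) (y : ℕ → A) (n k m T : ℕ) :
    (coeff T) (Wser p y n k m)
      = ∑ ℓ ∈ Finset.Nat.antidiagonalTuple n T, coefAux p m n ℓ * mon y k n ℓ :=
  coeff_mk _ _

lemma phi_recur (p : A) (y : ℕ → A) (n k m : ℕ) :
    phi p y (n + 1) k (m + 1) = phi p y (n + 1) k m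
      + phi p y (n + 1) k (m + 1) * (stieltjesCF y n (k + 1) * (C (p ^ m * y k) * X)) := by
  have hU : IsUnit (1 - stieltjesCF y n (k + 1) * (C (p ^ m * y k) * X)) :=
    isUnit_stieltjes_factor' _ _
  have h1 := Ring.inverse_mul_cancel _ hU
  rw [mul_sub, mul_one] at h1
  have h2 : Ring.inverse (1 - stieltjesCF y n (k + 1) * (C (p ^ m * y k) * X))
      = 1 + Ring.inverse (1 - stieltjesCF y n (k + 1) * (C (p ^ m * y k) * X))
        * (stieltjesCF y n (k + 1) * (C (p ^ m * y k) * X)) := eq_add_of_sub_eq h1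
  rw [phi_succ_succ]
  conv_lhs => rw [h2]
  rw [mul_add, mul_one, ← mul_assoc, ← phi_succ_succ]

lemma cancel_unit (D u : PowerSeries A) (hU : IsUnit (1 - u)) (h : D = D * u) : D = 0 := by
  have hz : D * (1 - u) = 0 := by rw [mul_sub, mul_one, ← h, sub_self]
  have h3 := congrArg (· * Ring.inverse (1 - u)) hz
  simpa [mul_assoc, Ring.mul_inverse_cancel _ hU] using h3

theorem phi_eq (p : A) (hpc : ∀ a : A, p * a = a * p) :
    ∀ (n k : ℕ) (y : ℕ → A),
    (∀ i, k ≤ i → i + 1 < k + n → y i * y (i + 1) = p * (y (i + 1) * y i)) →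
    (∀ i j, k ≤ i → i + 2 ≤ j → j < k + n → y i * y j = y j * y i) →
    ∀ m : ℕ, phi p y n k m = Wser p y n k m := by
  intro n
  induction n with
  | zero =>
    intro k y _ _ m
    ext T
    rw [phi_zero, coeff_Wser]
    cases T with
    | zero =>
      rw [Finset.Nat.antidiagonalTuple_zero_zero, Finset.sum_singleton]
      simp [coefAux, mon]
    | succ T =>
      rw [Finset.Nat.antidiagonalTuple_zero_succ, Finset.sum_empty, PowerSeries.coeff_one,
        if_neg (Nat.succ_ne_zero T)]
  | succ n ihn =>
    intro k y hadjW hcommW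
    have ihn' : ∀ m T, (coeff T) (phi p y n (k + 1) m)
        = ∑ ℓ ∈ Finset.Nat.antidiagonalTuple n T, coefAux p m n ℓ * mon y (k + 1) n ℓ := by
      intro m T
      rw [ihn (k + 1) y (fun i h1 h2 => hadjW i (by omega) (by omega))
        (fun i j h1 h2 h3 => hcommW i j (by omega) h2 (by omega)) m, coeff_Wser]
    intro m
    induction m with
    | zero =>
      ext T
      rw [phi_succ_zero, coeff_Wser]
      cases T with
      | zero =>
        rw [Finset.Nat.antidiagonalTuple_zero_right, Finset.sum_singleton,
          coefAux_zero_left, if_pos rfl, one_mul, mon_zero_tuple]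
        simp
      | succ T =>
        have hz : ∀ ℓ ∈ Finset.Nat.antidiagonalTuple (n + 1) (T + 1),
            coefAux p 0 (n + 1) ℓ * mon y k (n + 1) ℓ = 0 := by
          intro ℓ hℓ
          rw [coefAux_zero_left, if_neg, zero_mul]
          intro h0
          have hmem := Finset.Nat.mem_antidiagonalTuple.mp hℓ
          rw [h0] at hmem
          simp at hmem
        rw [Finset.sum_eq_zero hz, PowerSeries.coeff_one, if_neg (Nat.succ_ne_zero T)]
    | succ m ihm =>
      have hnorm : ∀ a : ℕ, m + 1 + a - 1 = m + a := fun a => by omega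
      -- coefficient-level swap
      have hswapC : ∀ a d2 : ℕ, y k ^ a * (coeff d2) (stieltjesCF y n (k + 1))
          = (coeff d2) (stieltjesCF (upd y (k + 1) (p ^ a)) n (k + 1)) * y k ^ a := by
        intro a d2
        have hs := swap_pow_stieltjesCF p hpc a n k y
          (fun hn => hadjW k (le_refl k) (by omega))
          (fun i h1 h2 => hcommW k i (le_refl k) h1 (by omega))
        have hcoeff := congrArg (coeff d2) hs
        rwa [coeff_C_mul, coeff_mul_C] at hcoeff
      -- the coefficients of W * S
      have hWS : ∀ d : ℕ,
          (coeff d) (Wser p y (n + 1) k (m + 1) * stieltjesCF y n (k + 1))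
            = ∑ ae ∈ Finset.HasAntidiagonal.antidiagonal d, qBinom p (m + ae.1) ae.1
                * (coeff ae.2) (phi p y n (k + 1) (ae.1 + 1)) * y k ^ ae.1 := by
        intro d
        rw [coeff_mul]
        have step1 : ∀ cd : ℕ × ℕ,
            (coeff cd.1) (Wser p y (n + 1) k (m + 1))
                * (coeff cd.2) (stieltjesCF y n (k + 1))
              = ∑ ab ∈ Finset.HasAntidiagonal.antidiagonal cd.1, qBinom p (m + ab.1) ab.1
                  * (coeff ab.2) (phi p y n (k + 1) ab.1)
                  * ((coeff cd.2) (stieltjesCF (upd y (k + 1) (p ^ ab.1)) n (k + 1))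
                      * y k ^ ab.1) := by
          intro cd
          rw [coeff_Wser, phiForm p n k y ihn' (m + 1) cd.1]
          simp only [hnorm]
          rw [Finset.sum_mul]
          refine Finset.sum_congr rfl fun ab _ => ?_
          rw [mul_assoc (qBinom p (m + ab.1) ab.1 * (coeff ab.2) (phi p y n (k + 1) ab.1))
            (y k ^ ab.1) ((coeff cd.2) (stieltjesCF y n (k + 1))), hswapC ab.1 cd.2,
            ← mul_assoc, mul_assoc]
        have hsum1 : (∑ cd ∈ Finset.HasAntidiagonal.antidiagonal d,
              (coeff cd.1) (Wser p y (n + 1) k (m + 1))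
                * (coeff cd.2) (stieltjesCF y n (k + 1)))
            = ∑ cd ∈ Finset.HasAntidiagonal.antidiagonal d, ∑ ab ∈ Finset.HasAntidiagonal.antidiagonal cd.1,
                qBinom p (m + ab.1) ab.1 * (coeff ab.2) (phi p y n (k + 1) ab.1)
                  * ((coeff cd.2) (stieltjesCF (upd y (k + 1) (p ^ ab.1)) n (k + 1))
                      * y k ^ ab.1) :=
          Finset.sum_congr rfl fun cd _ => step1 cd
        rw [hsum1, sum_antidiagonal_assoc d (fun a b d2 => qBinom p (m + a) a
          * (coeff b) (phi p y n (k + 1) a)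
          * ((coeff d2) (stieltjesCF (upd y (k + 1) (p ^ a)) n (k + 1)) * y k ^ a))]
        refine Finset.sum_congr rfl fun ae _ => ?_
        rw [← phi_step_factor p y n k ae.1, coeff_mul, Finset.mul_sum, Finset.sum_mul]
        refine Finset.sum_congr rfl fun bd _ => ?_
        rw [mul_assoc (qBinom p (m + ae.1) ae.1), ← mul_assoc ((coeff bd.1)
          (phi p y n (k + 1) ae.1)), ← mul_assoc, ← mul_assoc]
      -- W satisfies the same recursion as phi
      have hW : Wser p y (n + 1) k (m + 1) = phi p y (n + 1) k m
          + Wser p y (n + 1) k (m + 1)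
            * (stieltjesCF y n (k + 1) * (C (p ^ m * y k) * X)) := by
        ext T'
        rw [map_add, coeff_Wser, phiForm p n k y ihn' (m + 1) T']
        simp only [hnorm]
        rw [ihm, coeff_Wser, phiForm p n k y ihn' m T',
          ← mul_assoc (Wser p y (n + 1) k (m + 1)) (stieltjesCF y n (k + 1))
            (C (p ^ m * y k) * X), coeff_mul_CX]
        cases T' with
        | zero =>
          rw [if_pos rfl, add_zero]
          rw [Finset.Nat.antidiagonal_zero, Finset.sum_singleton, Finset.sum_singleton]
          simp [qBinom_zero_right]
        | succ t =>
          rw [if_neg (Nat.succ_ne_zero t), Nat.add_sub_cancel, hWS t, Finset.sum_mul,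
            Finset.Nat.sum_antidiagonal_succ
              (f := fun ab => qBinom p (m + ab.1) ab.1
                * (coeff ab.2) (phi p y n (k + 1) ab.1) * y k ^ ab.1),
            Finset.Nat.sum_antidiagonal_succ
              (f := fun ab => qBinom p (m + ab.1 - 1) ab.1
                * (coeff ab.2) (phi p y n (k + 1) ab.1) * y k ^ ab.1),
            add_assoc, ← Finset.sum_add_distrib]
          refine congrArg₂ (· + ·) ?_ (Finset.sum_congr rfl fun ab _ => ?_)
          · simp [qBinom_zero_right]
          · have hyp : y k ^ ab.1 * (p ^ m * y k) = p ^ m * y k ^ (ab.1 + 1) := by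
              rw [← mul_assoc, ← pow_central hpc m (y k ^ ab.1), mul_assoc, ← pow_succ]
            have e1 : m + (ab.1 + 1) - 1 = m + ab.1 := by omega
            have e2 : m + (ab.1 + 1) = m + ab.1 + 1 := by omega
            rw [e1, e2, qBinom_pascal' p (m + ab.1) ab.1,
              show m + ab.1 - ab.1 = m from by omega]
            rw [mul_assoc (qBinom p (m + ab.1) ab.1
              * (coeff ab.2) (phi p y n (k + 1) (ab.1 + 1))) (y k ^ ab.1) (p ^ m * y k), hyp]
            have hpull : qBinom p (m + ab.1) ab.1
                  * (coeff ab.2) (phi p y n (k + 1) (ab.1 + 1))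
                  * (p ^ m * y k ^ (ab.1 + 1))
                = p ^ m * qBinom p (m + ab.1) ab.1
                  * (coeff ab.2) (phi p y n (k + 1) (ab.1 + 1)) * y k ^ (ab.1 + 1) := by
              rw [← mul_assoc, mul_assoc (qBinom p (m + ab.1) ab.1),
                ← pow_central hpc m ((coeff ab.2) (phi p y n (k + 1) (ab.1 + 1))),
                ← mul_assoc, ← pow_central hpc m (qBinom p (m + ab.1) ab.1), mul_assoc,
                mul_assoc, ← mul_assoc (qBinom p (m + ab.1) ab.1)]
            rw [hpull, add_mul, add_mul]
      -- conclude by cancellation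
      have hD : phi p y (n + 1) k (m + 1) - Wser p y (n + 1) k (m + 1)
          = (phi p y (n + 1) k (m + 1) - Wser p y (n + 1) k (m + 1))
            * (stieltjesCF y n (k + 1) * (C (p ^ m * y k) * X)) := by
        calc phi p y (n + 1) k (m + 1) - Wser p y (n + 1) k (m + 1)
            = (phi p y (n + 1) k m + phi p y (n + 1) k (m + 1)
                * (stieltjesCF y n (k + 1) * (C (p ^ m * y k) * X)))
              - (phi p y (n + 1) k m + Wser p y (n + 1) k (m + 1)
                * (stieltjesCF y n (k + 1) * (C (p ^ m * y k) * X))) := by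
              rw [← phi_recur p y n k m, ← hW]
          _ = phi p y (n + 1) k (m + 1)
                * (stieltjesCF y n (k + 1) * (C (p ^ m * y k) * X))
              - Wser p y (n + 1) k (m + 1)
                * (stieltjesCF y n (k + 1) * (C (p ^ m * y k) * X)) := by abel
          _ = (phi p y (n + 1) k (m + 1) - Wser p y (n + 1) k (m + 1))
                * (stieltjesCF y n (k + 1) * (C (p ^ m * y k) * X)) :=
              (sub_mul _ _ _).symm
      have hzero := cancel_unit _ _ (isUnit_stieltjes_factor' _ _) hD
      exact sub_eq_zero.mp hzero

lemma coefAux_eq_listProd (p : A) (n : ℕ) : ∀ (m : ℕ) (ℓ : Fin (n + 1) → ℕ),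
    coefAux p m (n + 1) ℓ = qBinom p (m + ℓ 0 - 1) (ℓ 0)
      * (List.ofFn fun i : Fin n =>
          qBinom p (ℓ i.castSucc + ℓ i.succ - 1) (ℓ i.succ)).prod := by
  induction n with
  | zero =>
    intro m ℓ
    rw [coefAux]
    simp [coefAux]
  | succ n ih =>
    intro m ℓ
    rw [coefAux, ih (ℓ 0) (Fin.tail ℓ), List.ofFn_succ, List.prod_cons]
    congr 1
end StieltjesAux

/-- Expansion of the Stieltjes continued fraction `S_1` for weights with
`y_i y_{i+1} = p y_{i+1} y_i` and `y_i y_j = y_j y_i` for `|i-j| ≥ 2`: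
`S_1 = ∑_{ℓ_1,…,ℓ_N ≥ 0} ∏_{i=1}^{N-1} [ℓ_i+ℓ_{i+1}-1 choose ℓ_{i+1}]_p
(t y_N)^{ℓ_N} ⋯ (t y_1)^{ℓ_1}`. -/
theorem stieltjes_expansion {A : Type*} [Ring A] (N : ℕ) (p : A)
    (hpc : ∀ a : A, p * a = a * p) (y : ℕ → A)
    (hadj : ∀ i, i + 1 < N → y i * y (i + 1) = p * (y (i + 1) * y i))
    (hcomm : ∀ i j, i + 2 ≤ j → j < N → y i * y j = y j * y i) :
    stieltjesCF y N 0 =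
      PowerSeries.mk (fun M =>
        ∑ ℓ ∈ Finset.Nat.antidiagonalTuple N M,
          (List.ofFn fun i : Fin (N - 1) =>
            qBinom p (ℓ ⟨i.1, by have := i.isLt; omega⟩ +
                ℓ ⟨i.1 + 1, by have := i.isLt; omega⟩ - 1)
              (ℓ ⟨i.1 + 1, by have := i.isLt; omega⟩)).prod *
          (List.ofFn fun i : Fin N => y i ^ ℓ i).reverse.prod) := by
  rw [StieltjesAux.stieltjesCF_eq_phi_one p y N 0,
    StieltjesAux.phi_eq p hpc N 0 y (fun i _ h2 => hadj i (by omega))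
      (fun i j _ h2 h3 => hcomm i j h2 (by omega)) 1]
  ext T
  rw [StieltjesAux.coeff_Wser, PowerSeries.coeff_mk]
  refine Finset.sum_congr rfl fun ℓ _ => ?_
  congr 1
  · cases N with
    | zero => rfl
    | succ n =>
      rw [StieltjesAux.coefAux_eq_listProd p n 1 ℓ, show 1 + ℓ 0 - 1 = ℓ 0 from by omega,
        StieltjesAux.qBinom_self, one_mul]
      rfl
  · rw [StieltjesAux.mon]
    refine congrArg List.prod (congrArg List.reverse (congrArg List.ofFn (funext fun i => ?_)))
    rw [Nat.zero_add]
end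

section
/- In the r = 1 (A_1) case: if y_1, y_2, y_3 satisfy y_1 y_2 = p y_2 y_1, y_2 y_3 = p y_3 y_2, y_1 y_3 = y_3 y_1 with p central, then the noncommutative continued fraction (1 - t y_1 - t (1 - t y_3)^{-1} y_2)^{-1} equals the sum over ell_1, ell_2, ell_3 >= 0 of [1 + ell_1 + ell_2 - 1; 0, ell_1, ell_2]_p [ell_2 + ell_3 - 1 choose ell_3]_p (t y_3)^{ell_3} (t y_2)^{ell_2} (t y_1)^{ell_1}, as a formal power series in the central variable t. -/
/-- The quantum trinomial coefficient `[a+b+c-1; a-1, b, c]_p`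
(`= [a+b+c-1 choose a-1]_p [b+c choose b]_p`, zero if `a = 0 < b + c`). -/
def qTrinom {R : Type*} [Ring R] (p : R) (a b c : ℕ) : R :=
  if a = 0 ∧ 0 < b + c then 0
  else qBinom p (a + b + c - 1) (a - 1) * qBinom p (b + c) b

namespace A1Aux
variable {R : Type*} [Ring R] (p : R)

lemma qBinom_zero_right (n : ℕ) : qBinom p n 0 = 1 := by cases n <;> rfl

lemma qBinom_succ_succ (n k : ℕ) :
    qBinom p (n + 1) (k + 1) = qBinom p n k + p ^ (k + 1) * qBinom p n (k + 1) := rfl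

lemma qBinom_eq_zero : ∀ {n k : ℕ}, n < k → qBinom p n k = 0
  | 0, _ + 1, _ => rfl
  | n + 1, k + 1, h => by
    rw [qBinom_succ_succ, qBinom_eq_zero (n := n) (k := k) (by omega),
      qBinom_eq_zero (n := n) (k := k + 1) (by omega), mul_zero, add_zero]

lemma qBinom_self : ∀ n : ℕ, qBinom p n n = 1
  | 0 => rfl
  | n + 1 => by
    rw [qBinom_succ_succ, qBinom_self n,
      qBinom_eq_zero p (n := n) (k := n + 1) (Nat.lt_succ_self n), mul_zero, add_zero]

lemma qBinom_one_right : ∀ n : ℕ, qBinom p (n + 1) 1 = p ^ n + qBinom p n 1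
  | 0 => by
    show qBinom p 1 1 = p ^ 0 + qBinom p 0 1
    rw [qBinom_self, pow_zero]
    show (1 : R) = 1 + 0
    rw [add_zero]
  | n + 1 => by
    have hdef : ∀ m : ℕ, qBinom p (m + 1) 1 = 1 + p * qBinom p m 1 := fun m => by
      rw [qBinom_succ_succ, qBinom_zero_right, pow_one]
    calc qBinom p (n + 2) 1 = 1 + p * qBinom p (n + 1) 1 := hdef (n + 1)
      _ = 1 + p * (p ^ n + qBinom p n 1) := by rw [qBinom_one_right n]
      _ = 1 + (p ^ (n + 1) + p * qBinom p n 1) := by rw [mul_add, ← pow_succ']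
      _ = p ^ (n + 1) + (1 + p * qBinom p n 1) := by abel
      _ = p ^ (n + 1) + qBinom p (n + 1) 1 := by rw [← hdef n]

lemma qBinom_pascal' : ∀ n k : ℕ,
    qBinom p (n + k + 1) (k + 1) = p ^ n * qBinom p (n + k) k + qBinom p (n + k) (k + 1)
  | 0, k => by
    simp only [Nat.zero_add, pow_zero, one_mul]
    rw [qBinom_self, qBinom_self, qBinom_eq_zero p (n := k) (k := k + 1) (Nat.lt_succ_self k),
      add_zero]
  | n + 1, 0 => by
    simpa [qBinom_zero_right] using qBinom_one_right p (n + 1)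
  | n + 1, k + 1 => by
    have h1 : qBinom p (n + 1 + k + 1) (k + 1)
        = p ^ (n + 1) * qBinom p (n + 1 + k) k + qBinom p (n + 1 + k) (k + 1) :=
      qBinom_pascal' (n + 1) k
    have h2 : qBinom p (n + 1 + k + 1) (k + 2)
        = p ^ n * qBinom p (n + 1 + k) (k + 1) + qBinom p (n + 1 + k) (k + 2) := by
      have := qBinom_pascal' n (k + 1)
      rwa [show n + (k + 1) + 1 = n + 1 + k + 1 by omega, show n + (k + 1) = n + 1 + k by omega]
        at this
    set m := n + 1 + k with hm
    calc qBinom p (n + 1 + (k + 1) + 1) (k + 2)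
        = qBinom p (m + 1) (k + 1) + p ^ (k + 2) * qBinom p (m + 1) (k + 2) := by
          rw [show n + 1 + (k + 1) + 1 = m + 1 + 1 by omega]
          exact qBinom_succ_succ p (m + 1) (k + 1)
      _ = (p ^ (n + 1) * qBinom p m k + qBinom p m (k + 1))
          + p ^ (k + 2) * (p ^ n * qBinom p m (k + 1) + qBinom p m (k + 2)) := by rw [h1, h2]
      _ = p ^ (n + 1) * qBinom p m k + qBinom p m (k + 1)
          + p ^ (n + k + 2) * qBinom p m (k + 1) + p ^ (k + 2) * qBinom p m (k + 2) := by
          rw [mul_add, ← mul_assoc, ← pow_add, show k + 2 + n = n + k + 2 by omega, ← add_assoc]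
      _ = p ^ (n + 1) * (qBinom p m k + p ^ (k + 1) * qBinom p m (k + 1))
          + (qBinom p m (k + 1) + p ^ (k + 2) * qBinom p m (k + 2)) := by
          rw [mul_add, ← mul_assoc, ← pow_add, show n + 1 + (k + 1) = n + k + 2 by omega]
          abel
      _ = p ^ (n + 1) * qBinom p (m + 1) (k + 1) + qBinom p (m + 1) (k + 2) := by
          rw [← qBinom_succ_succ, ← qBinom_succ_succ]
      _ = p ^ (n + 1) * qBinom p (n + 1 + (k + 1)) (k + 1) + qBinom p (n + 1 + (k + 1)) (k + 2) := by
          rw [show n + 1 + (k + 1) = m + 1 by omega]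

lemma ppow_comm (hpc : ∀ a : R, p * a = a * p) (m : ℕ) (x : R) : p ^ m * x = x * p ^ m := by
  induction m with
  | zero => simp
  | succ n ih => rw [pow_succ, mul_assoc, hpc, ← mul_assoc, ih, mul_assoc, ← pow_succ]

lemma qBinom_comm (hpc : ∀ a : R, p * a = a * p) (n k : ℕ) (x : R) :
    qBinom p n k * x = x * qBinom p n k := by
  induction n generalizing k with
  | zero =>
    cases k with
    | zero => rw [qBinom_zero_right, one_mul, mul_one]
    | succ k => show (0 : R) * x = x * 0; rw [zero_mul, mul_zero]
  | succ n ih =>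
    cases k with
    | zero => rw [qBinom_zero_right, one_mul, mul_one]
    | succ k =>
      rw [qBinom_succ_succ, add_mul, mul_add, ih k, mul_assoc, ih (k + 1), ← mul_assoc,
        ppow_comm p hpc (k + 1) x, mul_assoc]


def Tq (p : R) (a b c : ℕ) : R := qBinom p (a + b) a * qBinom p (b + c - 1) c

lemma key (hpc : ∀ a : R, p * a = a * p) (a b c : ℕ) (h : 2 ≤ a + b + c) :
    Tq p a b c = (if c = 0 then 0 else Tq p a b (c - 1))
      + (if a = 0 then 0 else p ^ b * Tq p (a - 1) b c)
      + (if b = 0 then 0 else p ^ c * Tq p a (b - 1) c)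
      - (if a = 0 ∨ c = 0 then 0 else p ^ b * Tq p (a - 1) b (c - 1)) := by
  rcases a with _ | a <;> rcases b with _ | b <;> rcases c with _ | c <;>
    simp only [Tq, if_true, if_false, eq_self_iff_true, Nat.succ_ne_zero, if_neg, or_true,
      true_or, or_self, reduceIte, Nat.add_sub_cancel, Nat.succ_sub_one, sub_zero, add_zero,
      zero_add]
  · exact absurd h (by omega)
  · obtain ⟨c, rfl⟩ : ∃ c', c = c' + 1 := ⟨c - 1, by omega⟩
    rw [Nat.add_sub_cancel,
      qBinom_eq_zero p (n := c + 1) (k := c + 1 + 1) (by omega),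
      qBinom_eq_zero p (n := c) (k := c + 1) (by omega)]
  · simp [qBinom_zero_right]
  · rw [qBinom_zero_right, qBinom_zero_right, one_mul, one_mul, one_mul,
      show b + 1 + (c + 1) - 1 = b + c + 1 by omega, show b + 1 + c - 1 = b + c by omega,
      show b + (c + 1) - 1 = b + c by omega]
    exact qBinom_succ_succ p (b + c) c
  · simp [qBinom_self, qBinom_zero_right]
  · rw [qBinom_self, qBinom_self, pow_zero]
    simp only [one_mul]
    abel
  · simp only [qBinom_zero_right, mul_one, pow_zero, one_mul]
    have hp := qBinom_pascal' p (b + 1) a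
    rw [show a + 1 + (b + 1) = b + 1 + a + 1 by omega, show a + (b + 1) = b + 1 + a by omega,
      show a + 1 + b = b + 1 + a by omega]
    exact hp
  · rw [show a + 1 + (b + 1) = a + b + 2 by omega, show b + 1 + (c + 1) - 1 = b + c + 1 by omega,
      show b + 1 + c - 1 = b + c by omega, show a + (b + 1) = a + b + 1 by omega,
      show b + (c + 1) - 1 = b + c by omega, show a + 1 + b = a + b + 1 by omega]
    have hB : qBinom p (a + b + 2) (a + 1)
        = p ^ (b + 1) * qBinom p (a + b + 1) a + qBinom p (a + b + 1) (a + 1) := by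
      have := qBinom_pascal' p (b + 1) a
      rwa [show b + 1 + a + 1 = a + b + 2 by omega, show b + 1 + a = a + b + 1 by omega] at this
    have hC : qBinom p (b + c + 1) (c + 1)
        = qBinom p (b + c) c + p ^ (c + 1) * qBinom p (b + c) (c + 1) :=
      qBinom_succ_succ p (b + c) c
    rw [hB, hC]
    simp only [add_mul, mul_add]
    simp only [← mul_assoc]
    rw [show qBinom p (a + b + 1) (a + 1) * p ^ (c + 1)
        = p ^ (c + 1) * qBinom p (a + b + 1) (a + 1) from (ppow_comm p hpc (c + 1) _).symm]
    abel



open Finset Finset.Nat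

lemma sum_tuple_three {M : Type*} [AddCommMonoid M] (f : ℕ → ℕ → ℕ → M) (n : ℕ) :
    ∑ ℓ ∈ antidiagonalTuple 3 n, f (ℓ 0) (ℓ 1) (ℓ 2)
      = ∑ x ∈ antidiagonal n, ∑ y ∈ antidiagonal x.2, f x.1 y.1 y.2 := by
  rw [Finset.sum_sigma']
  refine Finset.sum_bij' (fun ℓ _ => (⟨(ℓ 0, ℓ 1 + ℓ 2), (ℓ 1, ℓ 2)⟩ : (_ : ℕ × ℕ) × ℕ × ℕ))
    (fun x _ => ![x.1.1, x.2.1, x.2.2]) ?_ ?_ ?_ ?_ ?_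
  · intro ℓ hℓ
    simp only [mem_antidiagonalTuple, Fin.sum_univ_three] at hℓ
    simp [Finset.mem_sigma, Finset.HasAntidiagonal.mem_antidiagonal]
    omega
  · rintro ⟨x, y⟩ hx
    simp only [Finset.mem_sigma, Finset.HasAntidiagonal.mem_antidiagonal] at hx
    simp [mem_antidiagonalTuple, Fin.sum_univ_three]
    omega
  · intro ℓ hℓ
    funext i
    fin_cases i <;> simp
  · rintro ⟨⟨x1, x2⟩, ⟨y1, y2⟩⟩ hx
    simp only [Finset.mem_sigma, Finset.HasAntidiagonal.mem_antidiagonal] at hx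
    simp only [Matrix.cons_val_zero, Matrix.cons_val_one, Matrix.head_cons]
    obtain ⟨h1, h2⟩ := hx
    subst h2
    rfl
  · intro ℓ hℓ
    simp

variable {M : Type*} [AddCommMonoid M]

lemma shift_a (F : ℕ → ℕ → ℕ → M) (n : ℕ) :
    ∑ x ∈ antidiagonal (n + 1), ∑ y ∈ antidiagonal x.2,
        (if x.1 = 0 then 0 else F (x.1 - 1) y.1 y.2)
      = ∑ x ∈ antidiagonal n, ∑ y ∈ antidiagonal x.2, F x.1 y.1 y.2 := by
  rw [Finset.Nat.sum_antidiagonal_succ]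
  simp

lemma shift_b (F : ℕ → ℕ → ℕ → M) (n : ℕ) :
    ∑ x ∈ antidiagonal (n + 1), ∑ y ∈ antidiagonal x.2,
        (if y.1 = 0 then 0 else F x.1 (y.1 - 1) y.2)
      = ∑ x ∈ antidiagonal n, ∑ y ∈ antidiagonal x.2, F x.1 y.1 y.2 := by
  rw [Finset.Nat.sum_antidiagonal_succ']
  simp only [Finset.Nat.antidiagonal_zero, Finset.sum_singleton, if_true, zero_add]
  refine Finset.sum_congr rfl fun x _ => ?_
  rw [Finset.Nat.sum_antidiagonal_succ
    (f := fun y => if y.1 = 0 then 0 else F x.1 (y.1 - 1) y.2)]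
  simp

lemma shift_c (F : ℕ → ℕ → ℕ → M) (n : ℕ) :
    ∑ x ∈ antidiagonal (n + 1), ∑ y ∈ antidiagonal x.2,
        (if y.2 = 0 then 0 else F x.1 y.1 (y.2 - 1))
      = ∑ x ∈ antidiagonal n, ∑ y ∈ antidiagonal x.2, F x.1 y.1 y.2 := by
  rw [Finset.Nat.sum_antidiagonal_succ']
  simp only [Finset.Nat.antidiagonal_zero, Finset.sum_singleton, if_true, zero_add]
  refine Finset.sum_congr rfl fun x _ => ?_
  rw [Finset.Nat.sum_antidiagonal_succ'
    (f := fun y => if y.2 = 0 then 0 else F x.1 y.1 (y.2 - 1))]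
  simp


section Main
variable {A : Type*} [Ring A] (p y₁ y₂ y₃ : A)

/-- The monomial `y₃^c y₂^b y₁^a`. -/
def Yv (y₁ y₂ y₃ : A) (a b c : ℕ) : A := y₃ ^ c * (y₂ ^ b * y₁ ^ a)

/-- The coefficient sequence of the expansion. -/
def gfun (p y₁ y₂ y₃ : A) (M : ℕ) : A :=
  ∑ x ∈ antidiagonal M, ∑ y ∈ antidiagonal x.2,
    Tq p x.1 y.1 y.2 * Yv y₁ y₂ y₃ x.1 y.1 y.2

lemma Tq_comm (hpc : ∀ a : A, p * a = a * p) (a b c : ℕ) (x : A) :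
    Tq p a b c * x = x * Tq p a b c := by
  unfold Tq
  rw [mul_assoc, qBinom_comm p hpc (b + c - 1) c x, ← mul_assoc,
    qBinom_comm p hpc (a + b) a x, mul_assoc]

lemma sc_comm (hpc : ∀ a : A, p * a = a * p) (m a b c : ℕ) (x : A) :
    (p ^ m * Tq p a b c) * x = x * (p ^ m * Tq p a b c) := by
  rw [mul_assoc, Tq_comm p hpc a b c x, ← mul_assoc, ppow_comm p hpc m x, mul_assoc]

section comm

lemma pow12 (hpc : ∀ a : A, p * a = a * p) (h12 : y₁ * y₂ = p * (y₂ * y₁)) (b : ℕ) : y₁ * y₂ ^ b = p ^ b * (y₂ ^ b * y₁) := by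
  induction b with
  | zero => simp
  | succ b ih =>
    calc y₁ * y₂ ^ (b + 1) = (y₁ * y₂) * y₂ ^ b := by rw [pow_succ', ← mul_assoc]
      _ = p * (y₂ * (y₁ * y₂ ^ b)) := by rw [h12, mul_assoc, mul_assoc]
      _ = p * (y₂ * (p ^ b * (y₂ ^ b * y₁))) := by rw [ih]
      _ = p * (p ^ b * (y₂ * (y₂ ^ b * y₁))) := by
          rw [← mul_assoc y₂, ← ppow_comm p hpc b y₂, mul_assoc]
      _ = p ^ (b + 1) * (y₂ ^ (b + 1) * y₁) := by
          rw [← mul_assoc, ← pow_succ', ← mul_assoc y₂, ← pow_succ']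

lemma pow23 (hpc : ∀ a : A, p * a = a * p) (h23 : y₂ * y₃ = p * (y₃ * y₂)) (c : ℕ) : y₂ * y₃ ^ c = p ^ c * (y₃ ^ c * y₂) := by
  induction c with
  | zero => simp
  | succ c ih =>
    calc y₂ * y₃ ^ (c + 1) = (y₂ * y₃) * y₃ ^ c := by rw [pow_succ', ← mul_assoc]
      _ = p * (y₃ * (y₂ * y₃ ^ c)) := by rw [h23, mul_assoc, mul_assoc]
      _ = p * (y₃ * (p ^ c * (y₃ ^ c * y₂))) := by rw [ih]
      _ = p * (p ^ c * (y₃ * (y₃ ^ c * y₂))) := by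
          rw [← mul_assoc y₃, ← ppow_comm p hpc c y₃, mul_assoc]
      _ = p ^ (c + 1) * (y₃ ^ (c + 1) * y₂) := by
          rw [← mul_assoc, ← pow_succ', ← mul_assoc y₃, ← pow_succ']

lemma pow13 (h13 : y₁ * y₃ = y₃ * y₁) (c : ℕ) : y₁ * y₃ ^ c = y₃ ^ c * y₁ := by
  induction c with
  | zero => simp
  | succ c ih =>
    calc y₁ * y₃ ^ (c + 1) = (y₁ * y₃) * y₃ ^ c := by rw [pow_succ', ← mul_assoc]
      _ = y₃ * (y₁ * y₃ ^ c) := by rw [h13, mul_assoc]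
      _ = y₃ ^ (c + 1) * y₁ := by rw [ih, ← mul_assoc, ← pow_succ']

lemma y3Y (a b c : ℕ) : y₃ * Yv y₁ y₂ y₃ a b c = Yv y₁ y₂ y₃ a b (c + 1) := by
  unfold Yv
  rw [← mul_assoc, ← pow_succ']

lemma y1Y (hpc : ∀ a : A, p * a = a * p) (h12 : y₁ * y₂ = p * (y₂ * y₁)) (h13 : y₁ * y₃ = y₃ * y₁) (a b c : ℕ) : y₁ * Yv y₁ y₂ y₃ a b c = p ^ b * Yv y₁ y₂ y₃ (a + 1) b c := by
  unfold Yv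
  calc y₁ * (y₃ ^ c * (y₂ ^ b * y₁ ^ a)) = (y₁ * y₃ ^ c) * (y₂ ^ b * y₁ ^ a) := by
        rw [mul_assoc]
    _ = y₃ ^ c * ((y₁ * y₂ ^ b) * y₁ ^ a) := by
        rw [pow13 y₁ y₃ h13, mul_assoc, ← mul_assoc y₁]
    _ = y₃ ^ c * (p ^ b * (y₂ ^ b * (y₁ * y₁ ^ a))) := by
        rw [pow12 p y₁ y₂ hpc h12, mul_assoc, mul_assoc]
    _ = p ^ b * (y₃ ^ c * (y₂ ^ b * y₁ ^ (a + 1))) := by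
        rw [← pow_succ', ← mul_assoc, ← ppow_comm p hpc b (y₃ ^ c), mul_assoc]

lemma y2Y (hpc : ∀ a : A, p * a = a * p) (h23 : y₂ * y₃ = p * (y₃ * y₂)) (a b c : ℕ) : y₂ * Yv y₁ y₂ y₃ a b c = p ^ c * Yv y₁ y₂ y₃ a (b + 1) c := by
  unfold Yv
  calc y₂ * (y₃ ^ c * (y₂ ^ b * y₁ ^ a)) = (y₂ * y₃ ^ c) * (y₂ ^ b * y₁ ^ a) := by
        rw [mul_assoc]
    _ = p ^ c * (y₃ ^ c * (y₂ * (y₂ ^ b * y₁ ^ a))) := by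
        rw [pow23 p y₂ y₃ hpc h23, mul_assoc, mul_assoc]
    _ = p ^ c * (y₃ ^ c * (y₂ ^ (b + 1) * y₁ ^ a)) := by
        rw [← mul_assoc y₂, ← pow_succ']

end comm

lemma gfun_zero : gfun p y₁ y₂ y₃ 0 = 1 := by
  unfold gfun
  rw [Finset.Nat.antidiagonal_zero, Finset.sum_singleton, Finset.Nat.antidiagonal_zero,
    Finset.sum_singleton]
  show Tq p 0 0 0 * Yv y₁ y₂ y₃ 0 0 0 = 1
  unfold Tq Yv
  simp [qBinom_zero_right]

lemma gfun_one : gfun p y₁ y₂ y₃ 1 = y₂ + y₁ := by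
  unfold gfun
  rw [Finset.Nat.sum_antidiagonal_succ]
  rw [Finset.Nat.antidiagonal_zero, Finset.sum_singleton, Finset.Nat.sum_antidiagonal_succ]
  simp only [Finset.Nat.antidiagonal_zero, Finset.sum_singleton]
  norm_num [Tq, Yv, qBinom_zero_right, qBinom_self, show qBinom p 0 1 = 0 from rfl]

lemma gfun_rec (hpc : ∀ a : A, p * a = a * p) (h12 : y₁ * y₂ = p * (y₂ * y₁))
    (h23 : y₂ * y₃ = p * (y₃ * y₂)) (h13 : y₁ * y₃ = y₃ * y₁) (M : ℕ) :
    gfun p y₁ y₂ y₃ (M + 2) = y₃ * gfun p y₁ y₂ y₃ (M + 1) + y₁ * gfun p y₁ y₂ y₃ (M + 1)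
      + y₂ * gfun p y₁ y₂ y₃ (M + 1) - y₃ * (y₁ * gfun p y₁ y₂ y₃ M) := by
  have e3 : y₃ * gfun p y₁ y₂ y₃ (M + 1)
      = ∑ x ∈ antidiagonal (M + 2), ∑ y ∈ antidiagonal x.2,
          (if y.2 = 0 then 0 else Tq p x.1 y.1 (y.2 - 1) * Yv y₁ y₂ y₃ x.1 y.1 y.2) := by
    calc y₃ * gfun p y₁ y₂ y₃ (M + 1)
        = ∑ x ∈ antidiagonal (M + 1), ∑ y ∈ antidiagonal x.2,
            Tq p x.1 y.1 y.2 * Yv y₁ y₂ y₃ x.1 y.1 (y.2 + 1) := by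
          unfold gfun
          rw [Finset.mul_sum]
          refine Finset.sum_congr rfl fun x _ => ?_
          rw [Finset.mul_sum]
          refine Finset.sum_congr rfl fun y _ => ?_
          rw [← mul_assoc, ← Tq_comm p hpc x.1 y.1 y.2 y₃, mul_assoc, y3Y]
      _ = ∑ x ∈ antidiagonal (M + 2), ∑ y ∈ antidiagonal x.2,
            (if y.2 = 0 then 0 else Tq p x.1 y.1 (y.2 - 1) * Yv y₁ y₂ y₃ x.1 y.1 (y.2 - 1 + 1)) :=
          (shift_c (fun a b c => Tq p a b c * Yv y₁ y₂ y₃ a b (c + 1)) (M + 1)).symm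
      _ = _ := by
          refine Finset.sum_congr rfl fun x _ => Finset.sum_congr rfl fun y _ => ?_
          by_cases h : y.2 = 0
          · rw [if_pos h, if_pos h]
          · rw [if_neg h, if_neg h, Nat.sub_add_cancel (Nat.one_le_iff_ne_zero.mpr h)]
  have e1 : y₁ * gfun p y₁ y₂ y₃ (M + 1)
      = ∑ x ∈ antidiagonal (M + 2), ∑ y ∈ antidiagonal x.2,
          (if x.1 = 0 then 0 else (p ^ y.1 * Tq p (x.1 - 1) y.1 y.2) * Yv y₁ y₂ y₃ x.1 y.1 y.2) := by
    calc y₁ * gfun p y₁ y₂ y₃ (M + 1)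
        = ∑ x ∈ antidiagonal (M + 1), ∑ y ∈ antidiagonal x.2,
            (p ^ y.1 * Tq p x.1 y.1 y.2) * Yv y₁ y₂ y₃ (x.1 + 1) y.1 y.2 := by
          unfold gfun
          rw [Finset.mul_sum]
          refine Finset.sum_congr rfl fun x _ => ?_
          rw [Finset.mul_sum]
          refine Finset.sum_congr rfl fun y _ => ?_
          rw [← mul_assoc, ← Tq_comm p hpc x.1 y.1 y.2 y₁, mul_assoc,
            y1Y p y₁ y₂ y₃ hpc h12 h13, ← mul_assoc,
            Tq_comm p hpc x.1 y.1 y.2 (p ^ y.1)]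
      _ = ∑ x ∈ antidiagonal (M + 2), ∑ y ∈ antidiagonal x.2,
            (if x.1 = 0 then 0 else
              (p ^ y.1 * Tq p (x.1 - 1) y.1 y.2) * Yv y₁ y₂ y₃ (x.1 - 1 + 1) y.1 y.2) :=
          (shift_a (fun a b c => (p ^ b * Tq p a b c) * Yv y₁ y₂ y₃ (a + 1) b c) (M + 1)).symm
      _ = _ := by
          refine Finset.sum_congr rfl fun x _ => Finset.sum_congr rfl fun y _ => ?_
          by_cases h : x.1 = 0
          · rw [if_pos h, if_pos h]
          · rw [if_neg h, if_neg h, Nat.sub_add_cancel (Nat.one_le_iff_ne_zero.mpr h)]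
  have e2 : y₂ * gfun p y₁ y₂ y₃ (M + 1)
      = ∑ x ∈ antidiagonal (M + 2), ∑ y ∈ antidiagonal x.2,
          (if y.1 = 0 then 0 else (p ^ y.2 * Tq p x.1 (y.1 - 1) y.2) * Yv y₁ y₂ y₃ x.1 y.1 y.2) := by
    calc y₂ * gfun p y₁ y₂ y₃ (M + 1)
        = ∑ x ∈ antidiagonal (M + 1), ∑ y ∈ antidiagonal x.2,
            (p ^ y.2 * Tq p x.1 y.1 y.2) * Yv y₁ y₂ y₃ x.1 (y.1 + 1) y.2 := by
          unfold gfun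
          rw [Finset.mul_sum]
          refine Finset.sum_congr rfl fun x _ => ?_
          rw [Finset.mul_sum]
          refine Finset.sum_congr rfl fun y _ => ?_
          rw [← mul_assoc, ← Tq_comm p hpc x.1 y.1 y.2 y₂, mul_assoc,
            y2Y p y₁ y₂ y₃ hpc h23, ← mul_assoc,
            Tq_comm p hpc x.1 y.1 y.2 (p ^ y.2)]
      _ = ∑ x ∈ antidiagonal (M + 2), ∑ y ∈ antidiagonal x.2,
            (if y.1 = 0 then 0 else
              (p ^ y.2 * Tq p x.1 (y.1 - 1) y.2) * Yv y₁ y₂ y₃ x.1 (y.1 - 1 + 1) y.2) :=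
          (shift_b (fun a b c => (p ^ c * Tq p a b c) * Yv y₁ y₂ y₃ a (b + 1) c) (M + 1)).symm
      _ = _ := by
          refine Finset.sum_congr rfl fun x _ => Finset.sum_congr rfl fun y _ => ?_
          by_cases h : y.1 = 0
          · rw [if_pos h, if_pos h]
          · rw [if_neg h, if_neg h, Nat.sub_add_cancel (Nat.one_le_iff_ne_zero.mpr h)]
  have e13 : y₃ * (y₁ * gfun p y₁ y₂ y₃ M)
      = ∑ x ∈ antidiagonal (M + 2), ∑ y ∈ antidiagonal x.2,
          (if x.1 = 0 ∨ y.2 = 0 then 0 else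
            (p ^ y.1 * Tq p (x.1 - 1) y.1 (y.2 - 1)) * Yv y₁ y₂ y₃ x.1 y.1 y.2) := by
    calc y₃ * (y₁ * gfun p y₁ y₂ y₃ M)
        = ∑ x ∈ antidiagonal M, ∑ y ∈ antidiagonal x.2,
            (p ^ y.1 * Tq p x.1 y.1 y.2) * Yv y₁ y₂ y₃ (x.1 + 1) y.1 (y.2 + 1) := by
          unfold gfun
          rw [Finset.mul_sum, Finset.mul_sum]
          refine Finset.sum_congr rfl fun x _ => ?_
          rw [Finset.mul_sum, Finset.mul_sum]
          refine Finset.sum_congr rfl fun y _ => ?_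
          have h1 : y₁ * (Tq p x.1 y.1 y.2 * Yv y₁ y₂ y₃ x.1 y.1 y.2)
              = (p ^ y.1 * Tq p x.1 y.1 y.2) * Yv y₁ y₂ y₃ (x.1 + 1) y.1 y.2 := by
            rw [← mul_assoc, ← Tq_comm p hpc x.1 y.1 y.2 y₁, mul_assoc,
              y1Y p y₁ y₂ y₃ hpc h12 h13, ← mul_assoc, Tq_comm p hpc x.1 y.1 y.2 (p ^ y.1)]
          rw [h1, ← mul_assoc, ← sc_comm p hpc y.1 x.1 y.1 y.2 y₃, mul_assoc, y3Y]
      _ = ∑ x ∈ antidiagonal (M + 1), ∑ y ∈ antidiagonal x.2,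
            (if y.2 = 0 then 0 else
              (p ^ y.1 * Tq p x.1 y.1 (y.2 - 1)) * Yv y₁ y₂ y₃ (x.1 + 1) y.1 (y.2 - 1 + 1)) :=
          (shift_c (fun a b c => (p ^ b * Tq p a b c) * Yv y₁ y₂ y₃ (a + 1) b (c + 1)) M).symm
      _ = ∑ x ∈ antidiagonal (M + 1), ∑ y ∈ antidiagonal x.2,
            (if y.2 = 0 then 0 else
              (p ^ y.1 * Tq p x.1 y.1 (y.2 - 1)) * Yv y₁ y₂ y₃ (x.1 + 1) y.1 y.2) := by
          refine Finset.sum_congr rfl fun x _ => Finset.sum_congr rfl fun y _ => ?_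
          by_cases h : y.2 = 0
          · rw [if_pos h, if_pos h]
          · rw [if_neg h, if_neg h, Nat.sub_add_cancel (Nat.one_le_iff_ne_zero.mpr h)]
      _ = ∑ x ∈ antidiagonal (M + 2), ∑ y ∈ antidiagonal x.2,
            (if x.1 = 0 then 0 else
              (if y.2 = 0 then 0 else
                (p ^ y.1 * Tq p (x.1 - 1) y.1 (y.2 - 1)) * Yv y₁ y₂ y₃ (x.1 - 1 + 1) y.1 y.2)) :=
          (shift_a (fun a b c => if c = 0 then 0 else
            (p ^ b * Tq p a b (c - 1)) * Yv y₁ y₂ y₃ (a + 1) b c) (M + 1)).symm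
      _ = _ := by
          refine Finset.sum_congr rfl fun x _ => Finset.sum_congr rfl fun y _ => ?_
          by_cases h : x.1 = 0
          · rw [if_pos h, if_pos (Or.inl h)]
          · by_cases h' : y.2 = 0
            · rw [if_neg h, if_pos h', if_pos (Or.inr h')]
            · rw [if_neg h, if_neg h', if_neg (by tauto),
                Nat.sub_add_cancel (Nat.one_le_iff_ne_zero.mpr h)]
  rw [e3, e1, e2, e13]
  rw [← Finset.sum_add_distrib, ← Finset.sum_add_distrib, ← Finset.sum_sub_distrib]
  unfold gfun
  refine Finset.sum_congr rfl fun x hx => ?_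
  rw [← Finset.sum_add_distrib, ← Finset.sum_add_distrib, ← Finset.sum_sub_distrib]
  refine Finset.sum_congr rfl fun y hy => ?_
  have hx' := Finset.HasAntidiagonal.mem_antidiagonal.mp hx
  have hy' := Finset.HasAntidiagonal.mem_antidiagonal.mp hy
  have hk := key p hpc x.1 y.1 y.2 (by omega)
  calc Tq p x.1 y.1 y.2 * Yv y₁ y₂ y₃ x.1 y.1 y.2
      = ((if y.2 = 0 then 0 else Tq p x.1 y.1 (y.2 - 1))
          + (if x.1 = 0 then 0 else p ^ y.1 * Tq p (x.1 - 1) y.1 y.2)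
          + (if y.1 = 0 then 0 else p ^ y.2 * Tq p x.1 (y.1 - 1) y.2)
          - (if x.1 = 0 ∨ y.2 = 0 then 0 else p ^ y.1 * Tq p (x.1 - 1) y.1 (y.2 - 1)))
        * Yv y₁ y₂ y₃ x.1 y.1 y.2 := by rw [← hk]
    _ = _ := by
        rw [sub_mul, add_mul, add_mul, ite_mul, ite_mul, ite_mul, ite_mul]
        simp only [zero_mul]

end Main
end A1Aux

open A1Aux in
lemma qTrinom_one' {R : Type*} [Ring R] (p : R) (a b : ℕ) :
    qTrinom p 1 a b = qBinom p (a + b) a := by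
  unfold qTrinom
  rw [if_neg (fun h => absurd h.1 one_ne_zero), show 1 + a + b - 1 = a + b by omega,
    show (1 : ℕ) - 1 = 0 from rfl, qBinom_zero_right, one_mul]

open PowerSeries in
/-- The `A_1` case: for `y₁ y₂ = p y₂ y₁`, `y₂ y₃ = p y₃ y₂`, `y₁ y₃ = y₃ y₁` (`p` central),
`(1 - t y₁ - t (1 - t y₃)⁻¹ y₂)⁻¹ = ∑_{ℓ₁,ℓ₂,ℓ₃ ≥ 0} [1+ℓ₁+ℓ₂-1; 0, ℓ₁, ℓ₂]_p
[ℓ₂+ℓ₃-1 choose ℓ₃]_p (t y₃)^{ℓ₃} (t y₂)^{ℓ₂} (t y₁)^{ℓ₁}`. -/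
theorem a1_jacobi_expansion {A : Type*} [Ring A] (p y₁ y₂ y₃ : A)
    (hpc : ∀ a : A, p * a = a * p)
    (h12 : y₁ * y₂ = p * (y₂ * y₁)) (h23 : y₂ * y₃ = p * (y₃ * y₂))
    (h13 : y₁ * y₃ = y₃ * y₁) :
    Ring.inverse (1 - X * C y₁ - Ring.inverse (1 - X * C y₃) * (X * C y₂)) =
      PowerSeries.mk (fun M =>
        ∑ ℓ ∈ Finset.Nat.antidiagonalTuple 3 M,
          qTrinom p 1 (ℓ 0) (ℓ 1) * qBinom p (ℓ 1 + ℓ 2 - 1) (ℓ 2) *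
            (y₃ ^ ℓ 2 * (y₂ ^ ℓ 1 * y₁ ^ ℓ 0))) := by
  classical
  have hS : (PowerSeries.mk (fun M =>
        ∑ ℓ ∈ Finset.Nat.antidiagonalTuple 3 M,
          qTrinom p 1 (ℓ 0) (ℓ 1) * qBinom p (ℓ 1 + ℓ 2 - 1) (ℓ 2) *
            (y₃ ^ ℓ 2 * (y₂ ^ ℓ 1 * y₁ ^ ℓ 0))))
      = PowerSeries.mk (fun M => A1Aux.gfun p y₁ y₂ y₃ M) := by
    ext M
    simp only [PowerSeries.coeff_mk]
    rw [A1Aux.sum_tuple_three (f := fun a b c => qTrinom p 1 a b * qBinom p (b + c - 1) c *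
      (y₃ ^ c * (y₂ ^ b * y₁ ^ a)))]
    refine Finset.sum_congr rfl fun x _ => Finset.sum_congr rfl fun y _ => ?_
    rw [qTrinom_one']
    rfl
  rw [hS]
  set G : PowerSeries A := PowerSeries.mk (fun M => A1Aux.gfun p y₁ y₂ y₃ M) with hG_def
  set u : PowerSeries A := 1 - X * C y₃ with hu_def
  have hu : IsUnit u := by
    rw [PowerSeries.isUnit_iff_constantCoeff]
    simp [hu_def]
  have huv : u * Ring.inverse u = 1 := Ring.mul_inverse_cancel u hu
  have hvu : Ring.inverse u * u = 1 := Ring.inverse_mul_cancel u hu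
  set f : PowerSeries A := 1 - X * C y₁ - Ring.inverse u * (X * C y₂) with hf_def
  have hccv : constantCoeff (Ring.inverse u) = 1 := by
    have h := congrArg (constantCoeff) huv
    simp only [map_mul, map_one, hu_def, map_sub, constantCoeff_X, zero_mul,
      constantCoeff_C] at h
    simpa using h
  have hf : IsUnit f := by
    rw [PowerSeries.isUnit_iff_constantCoeff]
    simp [hf_def, hu_def, hccv]
  have hexp : (u - u * (X * C y₁) - X * C y₂) * G
      = G - X * (C y₃ * G) - X * (C y₁ * G) + X * (C y₃ * (X * (C y₁ * G)))
        - X * (C y₂ * G) := by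
    rw [hu_def]
    noncomm_ring
  have hmain : (u - u * (X * C y₁) - X * C y₂) * G = u := by
    rw [hexp, hu_def]
    ext M
    rcases M with _ | _ | M
    · simp [hG_def, A1Aux.gfun_zero]
    · simp only [map_sub, map_add, PowerSeries.coeff_succ_X_mul, PowerSeries.coeff_zero_X_mul,
        PowerSeries.coeff_C_mul, PowerSeries.coeff_mk, PowerSeries.coeff_one, hG_def,
        PowerSeries.coeff_C]
      norm_num
      rw [A1Aux.gfun_one p y₁ y₂ y₃, A1Aux.gfun_zero p y₁ y₂ y₃]
      simp only [mul_one]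
      abel
    · simp only [map_sub, map_add, PowerSeries.coeff_succ_X_mul,
        PowerSeries.coeff_C_mul, PowerSeries.coeff_mk, PowerSeries.coeff_one, hG_def,
        PowerSeries.coeff_C]
      rw [A1Aux.gfun_rec p y₁ y₂ y₃ hpc h12 h23 h13 M]
      norm_num
      abel
  have huf : u * f = u - u * (X * C y₁) - X * C y₂ := by
    rw [hf_def, mul_sub, mul_sub, mul_one, ← mul_assoc u (Ring.inverse u) (X * C y₂), huv, one_mul]
  have hfG : f * G = 1 := by
    have h2 : u * (f * G) = u * 1 := by
      rw [mul_one, ← mul_assoc, huf, hmain]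
    calc f * G = (Ring.inverse u * u) * (f * G) := by rw [hvu, one_mul]
      _ = Ring.inverse u * (u * (f * G)) := by rw [mul_assoc]
      _ = Ring.inverse u * (u * 1) := by rw [h2]
      _ = 1 := by rw [mul_one, hvu]
  calc Ring.inverse f = Ring.inverse f * (f * G) := by rw [hfG, mul_one]
    _ = (Ring.inverse f * f) * G := by rw [mul_assoc]
    _ = G := by rw [Ring.inverse_mul_cancel f hf, one_mul]
end

section
/- Suppose R_{i,j} (i in [0, r+1], j in Z) satisfy the commutation relations R_{i,j} R_{k,m} = q^{(m-j) Lambda_{i,k}} R_{k,m} R_{i,j} where Lambda_{i,k} = min(i,k)(r+1-max(i,k)) and q is central invertible, and define y_{2i-1} = R_{i,1} R_{i-1,1}^{-1} R_{i,0}^{-1} R_{i-1,0} and y_{2i} = R_{i+1,1} R_{i,1}^{-1} R_{i,0}^{-1} R_{i-1,0} (with R_{0,j} = R_{r+1,j} = 1). Then with p = q^{r+1}: y_i y_{i+1} = p y_{i+1} y_i for 1 <= i <= 2r, y_{2i} y_{2i+2} = p y_{2i+2} y_{2i} for 1 <= i <= r-1, and all other pairs y_j, y_k commute. -/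
/-- The fundamental weights `y_n(𝐦₀)` of the quantum `A_r` `Q`-system:
`y_{2i-1} = R_{i,1} R_{i-1,1}⁻¹ R_{i,0}⁻¹ R_{i-1,0}` and
`y_{2i} = R_{i+1,1} R_{i,1}⁻¹ R_{i,0}⁻¹ R_{i-1,0}`. -/
def qsysWeight {A : Type*} [Ring A] (R : ℕ → ℤ → Aˣ) (n : ℕ) : Aˣ :=
  if n % 2 = 1 then
    let i := (n + 1) / 2
    R i 1 * (R (i - 1) 1)⁻¹ * (R i 0)⁻¹ * R (i - 1) 0
  else
    let i := n / 2
    R (i + 1) 1 * (R i 1)⁻¹ * (R i 0)⁻¹ * R (i - 1) 0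

section QcAux

/-- exponent Λ as an integer -/
def lamE (r a b : ℕ) : ℤ := min (a : ℤ) (b : ℤ) * ((r : ℤ) + 1 - max (a : ℤ) (b : ℤ))

lemma lamE_of_le (r : ℕ) (a b : ℕ) (h : a ≤ b) :
    lamE r a b = (a : ℤ) * ((r : ℤ) + 1 - (b : ℤ)) := by
  unfold lamE
  rw [min_eq_left (by exact_mod_cast h), max_eq_right (by exact_mod_cast h : (a:ℤ) ≤ b)]

lemma lamE_of_ge (r : ℕ) (a b : ℕ) (h : b ≤ a) :
    lamE r a b = (b : ℤ) * ((r : ℤ) + 1 - (a : ℤ)) := by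
  unfold lamE
  rw [min_eq_right (by exact_mod_cast h), max_eq_left (by exact_mod_cast h : (b:ℤ) ≤ a)]

def Em (r a b c d a' b' c' d' : ℕ) : ℤ :=
  lamE r a c' - lamE r a d' - lamE r b c' + lamE r b d'
    - lamE r c a' + lamE r c b' + lamE r d a' - lamE r d b'

variable {A : Type*} [Ring A] {q : Aˣ}

lemma qc_symm {a b : Aˣ} {e : ℤ} (h : a * b = q ^ e * (b * a)) :
    b * a = q ^ (-e) * (a * b) := by
  rw [h, ← mul_assoc, ← zpow_add, neg_add_cancel, zpow_zero, one_mul]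

variable (hc : ∀ (e : ℤ) (u : Aˣ), q ^ e * u = u * q ^ e)
include hc

lemma qc_inv_left {a b : Aˣ} {e : ℤ} (h : a * b = q ^ e * (b * a)) :
    a⁻¹ * b = q ^ (-e) * (b * a⁻¹) := by
  apply mul_left_cancel (a := a)
  rw [mul_inv_cancel_left, ← mul_assoc, ← hc, mul_assoc, ← mul_assoc a, h,
    mul_assoc (q ^ e), mul_inv_cancel_right, ← mul_assoc, ← zpow_add,
    neg_add_cancel, zpow_zero, one_mul]

lemma qc_inv_right {a b : Aˣ} {e : ℤ} (h : a * b = q ^ e * (b * a)) :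
    a * b⁻¹ = q ^ (-e) * (b⁻¹ * a) := by
  have h2 := qc_symm (qc_inv_left hc (qc_symm h))
  simpa using h2

lemma qc_mul_right {a b c : Aˣ} {e f : ℤ} (h1 : a * b = q ^ e * (b * a))
    (h2 : a * c = q ^ f * (c * a)) :
    a * (b * c) = q ^ (e + f) * (b * c * a) := by
  calc a * (b * c) = (a * b) * c := (mul_assoc _ _ _).symm
    _ = q ^ e * (b * (a * c)) := by rw [h1, mul_assoc, mul_assoc]
    _ = q ^ e * (b * (q ^ f * (c * a))) := by rw [h2]
    _ = q ^ e * (q ^ f * (b * (c * a))) := by rw [← mul_assoc b, ← hc, mul_assoc]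
    _ = q ^ (e + f) * (b * c * a) := by rw [← mul_assoc, ← zpow_add, mul_assoc b]

lemma qc_mul_left {a b c : Aˣ} {e f : ℤ} (h1 : a * c = q ^ e * (c * a))
    (h2 : b * c = q ^ f * (c * b)) :
    (a * b) * c = q ^ (e + f) * (c * (a * b)) := by
  calc a * b * c = a * (q ^ f * (c * b)) := by rw [mul_assoc, h2]
    _ = q ^ f * ((a * c) * b) := by rw [← mul_assoc, ← hc, mul_assoc, ← mul_assoc a c b]
    _ = q ^ f * (q ^ e * (c * a) * b) := by rw [h1]
    _ = q ^ (e + f) * (c * (a * b)) := by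
        rw [mul_assoc (q ^ e), ← mul_assoc (q ^ f), ← zpow_add, mul_assoc c, add_comm f e]

lemma qc4_right {a b1 b2 b3 b4 : Aˣ} {e1 e2 e3 e4 : ℤ}
    (h1 : a * b1 = q ^ e1 * (b1 * a)) (h2 : a * b2 = q ^ e2 * (b2 * a))
    (h3 : a * b3 = q ^ e3 * (b3 * a)) (h4 : a * b4 = q ^ e4 * (b4 * a)) :
    a * (b1 * b2 * b3 * b4) = q ^ (e1 + e2 + e3 + e4) * (b1 * b2 * b3 * b4 * a) :=
  qc_mul_right hc (qc_mul_right hc (qc_mul_right hc h1 h2) h3) h4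

lemma qc4_left {a1 a2 a3 a4 c : Aˣ} {e1 e2 e3 e4 : ℤ}
    (h1 : a1 * c = q ^ e1 * (c * a1)) (h2 : a2 * c = q ^ e2 * (c * a2))
    (h3 : a3 * c = q ^ e3 * (c * a3)) (h4 : a4 * c = q ^ e4 * (c * a4)) :
    (a1 * a2 * a3 * a4) * c = q ^ (e1 + e2 + e3 + e4) * (c * (a1 * a2 * a3 * a4)) :=
  qc_mul_left hc (qc_mul_left hc (qc_mul_left hc h1 h2) h3) h4

lemma qc_master {r : ℕ} {R : ℕ → ℤ → Aˣ}
    (hbase : ∀ a b : ℕ, a ≤ r + 1 → b ≤ r + 1 → ∀ j m : ℤ,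
      R a j * R b m = q ^ ((m - j) * lamE r a b) * (R b m * R a j))
    (a b c d a' b' c' d' : ℕ)
    (ha : a ≤ r + 1) (hb : b ≤ r + 1) (hcc : c ≤ r + 1) (hd : d ≤ r + 1)
    (ha' : a' ≤ r + 1) (hb' : b' ≤ r + 1) (hc' : c' ≤ r + 1) (hd' : d' ≤ r + 1) :
    (R a 1 * (R b 1)⁻¹ * (R c 0)⁻¹ * R d 0) * (R a' 1 * (R b' 1)⁻¹ * (R c' 0)⁻¹ * R d' 0)
      = q ^ (Em r a b c d a' b' c' d') *
        ((R a' 1 * (R b' 1)⁻¹ * (R c' 0)⁻¹ * R d' 0) *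
          (R a 1 * (R b 1)⁻¹ * (R c 0)⁻¹ * R d 0)) := by
  have key : ∀ (x : ℕ), x ≤ r + 1 → ∀ j : ℤ,
      R x j * (R a' 1 * (R b' 1)⁻¹ * (R c' 0)⁻¹ * R d' 0)
        = q ^ ((1 - j) * lamE r x a' + -((1 - j) * lamE r x b')
            + -((0 - j) * lamE r x c') + (0 - j) * lamE r x d')
          * ((R a' 1 * (R b' 1)⁻¹ * (R c' 0)⁻¹ * R d' 0) * R x j) := by
    intro x hx j
    exact qc4_right hc (hbase x a' hx ha' j 1) (qc_inv_right hc (hbase x b' hx hb' j 1))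
      (qc_inv_right hc (hbase x c' hx hc' j 0)) (hbase x d' hx hd' j 0)
  have final := qc4_left hc (key a ha 1) (qc_inv_left hc (key b hb 1))
    (qc_inv_left hc (key c hcc 0)) (key d hd 0)
  convert final using 2
  simp only [Em]
  ring

end QcAux

lemma qsysWeight_odd {A : Type*} [Ring A] (R : ℕ → ℤ → Aˣ) (t : ℕ) :
    qsysWeight R (2 * t + 1) = R (t + 1) 1 * (R t 1)⁻¹ * (R (t + 1) 0)⁻¹ * R t 0 := by
  have h1 : (2 * t + 1) % 2 = 1 := by omega
  have h2 : (2 * t + 1 + 1) / 2 = t + 1 := by omega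
  simp [qsysWeight, h1, h2]

lemma qsysWeight_even {A : Type*} [Ring A] (R : ℕ → ℤ → Aˣ) (t : ℕ) :
    qsysWeight R (2 * (t + 1)) = R (t + 2) 1 * (R (t + 1) 1)⁻¹ * (R (t + 1) 0)⁻¹ * R t 0 := by
  have h1 : ¬ (2 * (t + 1)) % 2 = 1 := by omega
  have h2 : (2 * (t + 1)) / 2 = t + 1 := by omega
  simp [qsysWeight, h1, h2]

/-- Theorem `mzer`: for `R_{i,j}` satisfying
`R_{i,j} R_{k,m} = q^{(m-j)Λ_{i,k}} R_{k,m} R_{i,j}` with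
`Λ_{i,k} = min(i,k)(r+1-max(i,k))`, `q` central invertible, `R_{0,j} = R_{r+1,j} = 1`,
the weights `y` satisfy, with `p = q^{r+1}`: `y_i y_{i+1} = p y_{i+1} y_i` for
`1 ≤ i ≤ 2r`, `y_{2i} y_{2i+2} = p y_{2i+2} y_{2i}` for `1 ≤ i ≤ r-1`, and all
other pairs commute. -/
theorem fundamental_weights_commutation {A : Type*} [Ring A] (r : ℕ) (hr : 1 ≤ r)
    (q : Aˣ) (hq : ∀ a : A, (q : A) * a = a * (q : A))
    (R : ℕ → ℤ → Aˣ)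
    (hR0 : ∀ j : ℤ, R 0 j = 1) (hRtop : ∀ j : ℤ, R (r + 1) j = 1)
    (hcomm : ∀ i k : ℕ, i ≤ r + 1 → k ≤ r + 1 → ∀ j m : ℤ,
      (R i j : A) * (R k m : A) =
        ((q ^ ((m - j) * (min (i : ℤ) (k : ℤ) * ((r : ℤ) + 1 - max (i : ℤ) (k : ℤ)))) : Aˣ) : A) *
          ((R k m : A) * (R i j : A))) :
    (∀ i, 1 ≤ i → i ≤ 2 * r →
      qsysWeight R i * qsysWeight R (i + 1) =
        q ^ (r + 1) * (qsysWeight R (i + 1) * qsysWeight R i)) ∧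
    (∀ i, 1 ≤ i → i ≤ r - 1 →
      qsysWeight R (2 * i) * qsysWeight R (2 * i + 2) =
        q ^ (r + 1) * (qsysWeight R (2 * i + 2) * qsysWeight R (2 * i))) ∧
    (∀ j k, 1 ≤ j → j + 2 ≤ k → k ≤ 2 * r + 1 → ¬(j % 2 = 0 ∧ k = j + 2) →
      qsysWeight R j * qsysWeight R k = qsysWeight R k * qsysWeight R j) := by
  have hc : ∀ (e : ℤ) (u : Aˣ), q ^ e * u = u * q ^ e := by
    intro e u
    have hcu : Commute q u := Units.ext (hq u)
    exact (hcu.zpow_left e).eq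
  have hbase : ∀ a b : ℕ, a ≤ r + 1 → b ≤ r + 1 → ∀ j m : ℤ,
      R a j * R b m = q ^ ((m - j) * lamE r a b) * (R b m * R a j) := by
    intro a b ha hb j m
    exact Units.ext (hcomm a b ha hb j m)
  have hnat : ((r : ℤ) + 1) = ((r + 1 : ℕ) : ℤ) := by push_cast; ring
  refine ⟨?_, ?_, ?_⟩
  · -- part 1
    intro i h1 h2
    rcases Nat.mod_two_eq_zero_or_one i with hp | hp
    · -- i even, i = 2*(t+1)
      obtain ⟨t, rfl⟩ : ∃ t, i = 2 * (t + 1) := ⟨i / 2 - 1, by omega⟩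
      simp only [qsysWeight_even, qsysWeight_odd]
      have h := qc_master hc hbase (t + 2) (t + 1) (t + 1) t (t + 1 + 1) (t + 1) (t + 1 + 1) (t + 1)
        (by omega) (by omega) (by omega) (by omega) (by omega) (by omega) (by omega) (by omega)
      have hE : Em r (t + 2) (t + 1) (t + 1) t (t + 1 + 1) (t + 1) (t + 1 + 1) (t + 1)
          = (r : ℤ) + 1 := by
        simp only [Em]
        rw [lamE_of_le r (t + 2) (t + 1 + 1) (by omega),
          lamE_of_ge r (t + 2) (t + 1) (by omega),
          lamE_of_le r (t + 1) (t + 1 + 1) (by omega),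
          lamE_of_le r (t + 1) (t + 1) le_rfl,
          lamE_of_le r t (t + 1 + 1) (by omega),
          lamE_of_le r t (t + 1) (by omega)]
        push_cast; ring
      rw [hE, hnat, zpow_natCast] at h
      exact h
    · -- i odd, i = 2*t+1
      obtain ⟨t, rfl⟩ : ∃ t, i = 2 * t + 1 := ⟨i / 2, by omega⟩
      rw [show 2 * t + 1 + 1 = 2 * (t + 1) by ring]
      simp only [qsysWeight_even, qsysWeight_odd]
      have h := qc_master hc hbase (t + 1) t (t + 1) t (t + 2) (t + 1) (t + 1) t
        (by omega) (by omega) (by omega) (by omega) (by omega) (by omega) (by omega) (by omega)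
      have hE : Em r (t + 1) t (t + 1) t (t + 2) (t + 1) (t + 1) t = (r : ℤ) + 1 := by
        simp only [Em]
        rw [lamE_of_le r (t + 1) (t + 1) le_rfl,
          lamE_of_ge r (t + 1) t (by omega),
          lamE_of_le r t (t + 1) (by omega),
          lamE_of_le r t t le_rfl,
          lamE_of_le r (t + 1) (t + 2) (by omega),
          lamE_of_le r t (t + 2) (by omega)]
        push_cast; ring
      rw [hE, hnat, zpow_natCast] at h
      exact h
  · -- part 2
    intro i h1 h2
    obtain ⟨t, rfl⟩ : ∃ t, i = t + 1 := ⟨i - 1, by omega⟩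
    rw [show 2 * (t + 1) + 2 = 2 * (t + 1 + 1) by ring]
    simp only [qsysWeight_even]
    have h := qc_master hc hbase (t + 2) (t + 1) (t + 1) t (t + 1 + 2) (t + 1 + 1) (t + 1 + 1) (t + 1)
      (by omega) (by omega) (by omega) (by omega) (by omega) (by omega) (by omega) (by omega)
    have hE : Em r (t + 2) (t + 1) (t + 1) t (t + 1 + 2) (t + 1 + 1) (t + 1 + 1) (t + 1)
        = (r : ℤ) + 1 := by
      simp only [Em]
      rw [lamE_of_le r (t + 2) (t + 1 + 1) (by omega),
        lamE_of_ge r (t + 2) (t + 1) (by omega),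
        lamE_of_le r (t + 1) (t + 1 + 1) (by omega),
        lamE_of_le r (t + 1) (t + 1) le_rfl,
        lamE_of_le r (t + 1) (t + 1 + 2) (by omega),
        lamE_of_le r t (t + 1 + 2) (by omega),
        lamE_of_le r t (t + 1 + 1) (by omega)]
      push_cast; ring
    rw [hE, hnat, zpow_natCast] at h
    exact h
  · -- part 3
    intro j k hj hjk hk hnot
    rcases Nat.mod_two_eq_zero_or_one j with hpj | hpj
    · obtain ⟨s, rfl⟩ : ∃ s, j = 2 * (s + 1) := ⟨j / 2 - 1, by omega⟩
      rcases Nat.mod_two_eq_zero_or_one k with hpk | hpk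
      · -- even, even : k ≥ j + 4
        have hk4 : 2 * (s + 1) + 4 ≤ k := by
          rcases Nat.eq_or_lt_of_le hjk with h | h
          · exact absurd ⟨by omega, h.symm⟩ hnot
          · omega
        obtain ⟨v, rfl⟩ : ∃ v, k = 2 * (s + v + 2 + 1) := ⟨k / 2 - s - 3, by omega⟩
        simp only [qsysWeight_even]
        have h := qc_master hc hbase (s + 2) (s + 1) (s + 1) s
          (s + v + 2 + 2) (s + v + 2 + 1) (s + v + 2 + 1) (s + v + 2)
          (by omega) (by omega) (by omega) (by omega) (by omega) (by omega) (by omega) (by omega)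
        have hE : Em r (s + 2) (s + 1) (s + 1) s
            (s + v + 2 + 2) (s + v + 2 + 1) (s + v + 2 + 1) (s + v + 2) = 0 := by
          simp only [Em]
          rw [lamE_of_le r (s + 2) (s + v + 2 + 1) (by omega),
            lamE_of_le r (s + 2) (s + v + 2) (by omega),
            lamE_of_le r (s + 1) (s + v + 2 + 1) (by omega),
            lamE_of_le r (s + 1) (s + v + 2) (by omega),
            lamE_of_le r (s + 1) (s + v + 2 + 2) (by omega),
            lamE_of_le r s (s + v + 2 + 2) (by omega),
            lamE_of_le r s (s + v + 2 + 1) (by omega)]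
          push_cast; ring
        rw [hE, zpow_zero, one_mul] at h
        exact h
      · -- even, odd : k = 2u+1 with u ≥ s+3? u ≥ s+2+... k ≥ j+2 = 2s+4 → k ≥ 2s+5
        obtain ⟨v, rfl⟩ : ∃ v, k = 2 * (s + v + 2) + 1 := ⟨(k - 1) / 2 - s - 2, by omega⟩
        simp only [qsysWeight_even, qsysWeight_odd]
        have h := qc_master hc hbase (s + 2) (s + 1) (s + 1) s
          (s + v + 2 + 1) (s + v + 2) (s + v + 2 + 1) (s + v + 2)
          (by omega) (by omega) (by omega) (by omega) (by omega) (by omega) (by omega) (by omega)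
        have hE : Em r (s + 2) (s + 1) (s + 1) s
            (s + v + 2 + 1) (s + v + 2) (s + v + 2 + 1) (s + v + 2) = 0 := by
          simp only [Em]
          rw [lamE_of_le r (s + 2) (s + v + 2 + 1) (by omega),
            lamE_of_le r (s + 2) (s + v + 2) (by omega),
            lamE_of_le r (s + 1) (s + v + 2 + 1) (by omega),
            lamE_of_le r (s + 1) (s + v + 2) (by omega),
            lamE_of_le r s (s + v + 2 + 1) (by omega),
            lamE_of_le r s (s + v + 2) (by omega)]
          push_cast; ring
        rw [hE, zpow_zero, one_mul] at h
        exact h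
    · obtain ⟨s, rfl⟩ : ∃ s, j = 2 * s + 1 := ⟨j / 2, by omega⟩
      rcases Nat.mod_two_eq_zero_or_one k with hpk | hpk
      · -- odd, even : k = 2m, m ≥ s+2
        obtain ⟨v, rfl⟩ : ∃ v, k = 2 * (s + v + 1 + 1) := ⟨k / 2 - s - 2, by omega⟩
        simp only [qsysWeight_even, qsysWeight_odd]
        have h := qc_master hc hbase (s + 1) s (s + 1) s
          (s + v + 1 + 2) (s + v + 1 + 1) (s + v + 1 + 1) (s + v + 1)
          (by omega) (by omega) (by omega) (by omega) (by omega) (by omega) (by omega) (by omega)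
        have hE : Em r (s + 1) s (s + 1) s
            (s + v + 1 + 2) (s + v + 1 + 1) (s + v + 1 + 1) (s + v + 1) = 0 := by
          simp only [Em]
          rw [lamE_of_le r (s + 1) (s + v + 1 + 1) (by omega),
            lamE_of_le r (s + 1) (s + v + 1) (by omega),
            lamE_of_le r s (s + v + 1 + 1) (by omega),
            lamE_of_le r s (s + v + 1) (by omega),
            lamE_of_le r (s + 1) (s + v + 1 + 2) (by omega),
            lamE_of_le r s (s + v + 1 + 2) (by omega)]
          push_cast; ring
        rw [hE, zpow_zero, one_mul] at h
        exact h
      · -- odd, odd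
        obtain ⟨u, rfl⟩ : ∃ u, k = 2 * u + 1 := ⟨k / 2, by omega⟩
        simp only [qsysWeight_odd]
        have h := qc_master hc hbase (s + 1) s (s + 1) s (u + 1) u (u + 1) u
          (by omega) (by omega) (by omega) (by omega) (by omega) (by omega) (by omega) (by omega)
        have hE : Em r (s + 1) s (s + 1) s (u + 1) u (u + 1) u = 0 := by
          simp only [Em]; ring
        rw [hE, zpow_zero, one_mul] at h
        exact h
end
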